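/- arXiv:2302.08279 — 2 statements merged into one kernel-verified Lean document; each statement's English description precedes it below -/
import Mathlib

section
/- Fix p ≤ n, a p-element subset Y of [n], and w ∈ S_n with Y ≤ wW_p in the Bruhat order on cosets (equivalently Y ≤ {w_1,...,w_p}). Then the set {v ∈ S_n : vW_p = Y and v ≤ w in Bruhat order} is nonempty and contains a unique maximal element in the Bruhat order. -/
/-- Dominance order on equal-cardinality finite sets in a linear order:
the i-th smallest element of `E` is at most the i-th smallest element of `F`. -/
def Dom {α : Type*} [LinearOrder α] (E F : Finset α) : Prop :=
  List.Forall₂ (· ≤ ·) (Finset.sort E (· ≤ ·)) (Finset.sort F (· ≤ ·))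

/-- The set `{w_1, ..., w_i}` of the first `i` values of a permutation `w` of `[n]`
in one-line notation. -/
def initSet {n : ℕ} (w : Equiv.Perm (Fin n)) (i : ℕ) : Finset (Fin n) :=
  (Finset.univ.filter (fun j : Fin n => (j : ℕ) < i)).image w

/-- The Bruhat order on permutations, via the tableau criterion. -/
def Bruhat {n : ℕ} (v w : Equiv.Perm (Fin n)) : Prop :=
  ∀ i ≤ n, Dom (initSet v i) (initSet w i)

section Lists
variable {α : Type*} [LinearOrder α]

theorem countP_le_of_forall2 {l₁ l₂ : List α} (h : List.Forall₂ (· ≤ ·) l₁ l₂) (t : α) :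
    l₁.countP (fun x => decide (t ≤ x)) ≤ l₂.countP (fun x => decide (t ≤ x)) := by
  induction h with
  | nil => simp
  | @cons a b l₁' l₂' hab htail ih =>
    simp only [List.countP_cons]
    have : (if decide (t ≤ a) = true then 1 else 0) ≤ (if decide (t ≤ b) = true then 1 else 0) := by
      by_cases h : t ≤ a
      · simp [h, h.trans hab]
      · simp [h]
    omega

theorem forall2_iff_count (l₁ l₂ : List α) (h₁ : l₁.Pairwise (· < ·)) (h₂ : l₂.Pairwise (· < ·))
    (hlen : l₁.length = l₂.length) :
    List.Forall₂ (· ≤ ·) l₁ l₂ ↔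
      ∀ t, l₁.countP (fun x => decide (t ≤ x)) ≤ l₂.countP (fun x => decide (t ≤ x)) := by
  induction l₁ generalizing l₂ with
  | nil => cases l₂ <;> simp_all
  | cons a l₁' ih =>
    cases l₂ with
    | nil => simp at hlen
    | cons b l₂' =>
      simp only [List.pairwise_cons] at h₁ h₂
      simp only [List.length_cons, Nat.add_right_cancel_iff] at hlen
      constructor
      · intro h t; exact countP_le_of_forall2 h t
      · intro hcount
        have hab : a ≤ b := by
          by_contra hba
          have hlhs : (a :: l₁').countP (fun x => decide (a ≤ x)) = l₁'.length + 1 := by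
            rw [List.countP_cons]
            have : l₁'.countP (fun x => decide (a ≤ x)) = l₁'.length := by
              rw [List.countP_eq_length]; intro x hx; simpa using (h₁.1 x hx).le
            simp [this]
          have hrhs : (b :: l₂').countP (fun x => decide (a ≤ x)) ≤ l₂'.length := by
            rw [List.countP_cons]
            have : ¬ (a ≤ b) := hba
            simp [this]
            exact List.countP_le_length
          have := hcount a
          omega
        refine List.Forall₂.cons hab ?_
        refine ((ih l₂' h₁.2 h₂.2 hlen)).2 ?_
        intro t
        by_cases htb : t ≤ b
        · have : l₂'.countP (fun x => decide (t ≤ x)) = l₂'.length := by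
            rw [List.countP_eq_length]
            intro x hx
            simpa using le_trans htb (h₂.1 x hx).le
          rw [this, ← hlen]
          exact List.countP_le_length
        · have hta : ¬ t ≤ a := fun h => htb (h.trans hab)
          have e1 : (a :: l₁').countP (fun x => decide (t ≤ x)) = l₁'.countP (fun x => decide (t ≤ x)) := by
            simp [List.countP_cons, hta]
          have e2 : (b :: l₂').countP (fun x => decide (t ≤ x)) = l₂'.countP (fun x => decide (t ≤ x)) := by
            simp [List.countP_cons, htb]
          have := hcount t
          omega

end Lists

section DomBasic
variable {α : Type*} [LinearOrder α]

/-- threshold count -/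
def Nt (s : Finset α) (t : α) : ℕ := (s.filter (fun x => t ≤ x)).card

theorem Nt_eq_countP (s : Finset α) (t : α) :
    Nt s t = (Finset.sort s (· ≤ ·)).countP (fun x => decide (t ≤ x)) := by
  rw [Nt, (Finset.sort_perm_toList _ _).countP_eq, Finset.toList, ← Multiset.coe_countP,
    Multiset.coe_toList, Multiset.countP_eq_card_filter]
  rfl

theorem Dom.card_eq {E F : Finset α} (h : Dom E F) : E.card = F.card := by
  have := List.Forall₂.length_eq h
  simpa using this

theorem dom_iff_count {E F : Finset α} (hcard : E.card = F.card) :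
    Dom E F ↔ ∀ t, Nt E t ≤ Nt F t := by
  rw [Dom, forall2_iff_count _ _ ((Finset.sortedLT_sort E).pairwise) ((Finset.sortedLT_sort F).pairwise)
    (by simpa using hcard)]
  simp only [Nt_eq_countP]

theorem dom_refl (E : Finset α) : Dom E E := by
  rw [dom_iff_count rfl]; intro t; exact le_refl _

theorem Dom.trans {E F G : Finset α} (h₁ : Dom E F) (h₂ : Dom F G) : Dom E G := by
  rw [dom_iff_count (h₁.card_eq.trans h₂.card_eq)]
  intro t
  exact ((dom_iff_count h₁.card_eq).1 h₁ t).trans ((dom_iff_count h₂.card_eq).1 h₂ t)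

theorem Dom.antisymm {E F : Finset α} (h₁ : Dom E F) (h₂ : Dom F E) : E = F := by
  have : Finset.sort E (· ≤ ·) = Finset.sort F (· ≤ ·) := by
    have hlen := List.Forall₂.length_eq h₁
    apply List.ext_get (by simpa using hlen)
    intro i hi1 hi2
    exact le_antisymm ((List.forall₂_iff_get.1 h₁).2 i hi1 hi2) ((List.forall₂_iff_get.1 h₂).2 i hi2 hi1)
  have := congrArg List.toFinset this
  simpa [Finset.sort_toFinset] using this
end DomBasic


section NtLemmas
variable {α : Type*} [LinearOrder α]


theorem Nt_mono {s u : Finset α} (h : s ⊆ u) (t : α) : Nt s t ≤ Nt u t :=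
  Finset.card_le_card (Finset.filter_subset_filter _ h)

theorem Nt_le_card (s : Finset α) (t : α) : Nt s t ≤ s.card :=
  Finset.card_le_card (Finset.filter_subset _ _)

theorem Nt_insert {s : Finset α} {a : α} (ha : a ∉ s) (t : α) :
    Nt (insert a s) t = Nt s t + if t ≤ a then 1 else 0 := by
  rw [Nt, Nt, Finset.filter_insert]
  split
  · rw [Finset.card_insert_of_notMem (by simp [ha])]
  · rfl

theorem Nt_erase {s : Finset α} {b : α} (hb : b ∈ s) (t : α) :
    Nt s t = Nt (s.erase b) t + if t ≤ b then 1 else 0 := by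
  have : Nt (insert b (s.erase b)) t = Nt (s.erase b) t + if t ≤ b then 1 else 0 :=
    Nt_insert (Finset.notMem_erase _ _) t
  rwa [Finset.insert_erase hb] at this

theorem Nt_le_add_sub {s u : Finset α} (h : s ⊆ u) (t : α) :
    Nt u t ≤ Nt s t + (u.card - s.card) := by
  rw [Nt, Nt]
  have h1 : u.filter (fun x => t ≤ x) ⊆ s.filter (fun x => t ≤ x) ∪ (u \ s) := by
    intro x hx
    simp only [Finset.mem_filter, Finset.mem_union, Finset.mem_sdiff] at hx ⊢
    by_cases hxs : x ∈ s
    · exact Or.inl ⟨hxs, hx.2⟩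
    · exact Or.inr ⟨hx.1, hxs⟩
  calc (u.filter (fun x => t ≤ x)).card ≤ _ := Finset.card_le_card h1
    _ ≤ (s.filter (fun x => t ≤ x)).card + (u \ s).card := Finset.card_union_le _ _
    _ = _ := by rw [Finset.card_sdiff_of_subset h]

end NtLemmas


section DjoinList
variable {α : Type*} [LinearOrder α]

theorem mem_zipWith_max {l₁ l₂ : List α} {x : α} (h : x ∈ List.zipWith max l₁ l₂) :
    ∃ c ∈ l₁, ∃ d ∈ l₂, x = max c d := by
  induction l₁ generalizing l₂ with
  | nil => simp at h
  | cons a l₁ ih =>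
    cases l₂ with
    | nil => simp at h
    | cons b l₂ =>
      simp only [List.zipWith_cons_cons, List.mem_cons] at h
      rcases h with h | h
      · exact ⟨a, by simp, b, by simp, h⟩
      · obtain ⟨c, hc, d, hd, hx⟩ := ih h
        exact ⟨c, by simp [hc], d, by simp [hd], hx⟩

theorem sorted_zipWith_max {l₁ l₂ : List α} (h₁ : l₁.Pairwise (· < ·)) (h₂ : l₂.Pairwise (· < ·)) :
    (List.zipWith max l₁ l₂).Pairwise (· < ·) := by
  induction l₁ generalizing l₂ with
  | nil => simp
  | cons a l₁ ih =>
    cases l₂ with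
    | nil => simp
    | cons b l₂ =>
      simp only [List.pairwise_cons] at h₁ h₂
      rw [List.zipWith_cons_cons, List.pairwise_cons]
      refine ⟨?_, ih h₁.2 h₂.2⟩
      intro x hx
      obtain ⟨c, hc, d, hd, hx⟩ := mem_zipWith_max hx
      subst hx
      exact max_lt_max (h₁.1 c hc) (h₂.1 d hd)

theorem countP_zipWith_max {l₁ l₂ : List α} (h₁ : l₁.Pairwise (· < ·)) (h₂ : l₂.Pairwise (· < ·))
    (hlen : l₁.length = l₂.length) (t : α) :
    (List.zipWith max l₁ l₂).countP (fun x => decide (t ≤ x)) =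
      max (l₁.countP (fun x => decide (t ≤ x))) (l₂.countP (fun x => decide (t ≤ x))) := by
  induction l₁ generalizing l₂ with
  | nil =>
    cases l₂ with
    | nil => simp
    | cons b l₂ => simp at hlen
  | cons a l₁ ih =>
    cases l₂ with
    | nil => simp at hlen
    | cons b l₂ =>
      simp only [List.pairwise_cons] at h₁ h₂
      simp only [List.length_cons, Nat.add_right_cancel_iff] at hlen
      rw [List.zipWith_cons_cons]
      by_cases hta : t ≤ a
      · have e1 : (a :: l₁).countP (fun x => decide (t ≤ x)) = l₁.length + 1 := by
          rw [List.countP_cons]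
          have : l₁.countP (fun x => decide (t ≤ x)) = l₁.length := by
            rw [List.countP_eq_length]; intro x hx; simpa using (hta.trans (h₁.1 x hx).le)
          simp [this, hta]
        have e2 : (max a b :: List.zipWith max l₁ l₂).countP (fun x => decide (t ≤ x)) =
            (List.zipWith max l₁ l₂).length + 1 := by
          rw [List.countP_cons]
          have : (List.zipWith max l₁ l₂).countP (fun x => decide (t ≤ x)) =
              (List.zipWith max l₁ l₂).length := by
            rw [List.countP_eq_length]
            intro x hx
            obtain ⟨c, hc, d, hd, hx⟩ := mem_zipWith_max hx
            subst hx
            simpa using Or.inl (hta.trans (h₁.1 c hc).le)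
          simp [this, hta.trans (le_max_left a b)]
        rw [e1, e2, List.length_zipWith, hlen]
        have := List.countP_le_length (l := b :: l₂) (p := fun x => decide (t ≤ x))
        simp only [List.length_cons] at this
        omega
      · by_cases htb : t ≤ b
        · have e2 : (b :: l₂).countP (fun x => decide (t ≤ x)) = l₂.length + 1 := by
            rw [List.countP_cons]
            have : l₂.countP (fun x => decide (t ≤ x)) = l₂.length := by
              rw [List.countP_eq_length]; intro x hx; simpa using (htb.trans (h₂.1 x hx).le)
            simp [this, htb]
          have e3 : (max a b :: List.zipWith max l₁ l₂).countP (fun x => decide (t ≤ x)) =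
              (List.zipWith max l₁ l₂).length + 1 := by
            rw [List.countP_cons]
            have : (List.zipWith max l₁ l₂).countP (fun x => decide (t ≤ x)) =
                (List.zipWith max l₁ l₂).length := by
              rw [List.countP_eq_length]
              intro x hx
              obtain ⟨c, hc, d, hd, hx⟩ := mem_zipWith_max hx
              subst hx
              simpa using Or.inr (htb.trans (h₂.1 d hd).le)
            simp [this, htb.trans (le_max_right a b)]
          rw [e2, e3, List.length_zipWith, hlen]
          have := List.countP_le_length (l := a :: l₁) (p := fun x => decide (t ≤ x))
          simp only [List.length_cons] at this
          omega
        · have hmab : ¬ t ≤ max a b := by simp [hta, htb]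
          rw [List.countP_cons, List.countP_cons, List.countP_cons]
          simp only [hta, htb, hmab, decide_false]
          simp only [if_neg (by simp : ¬ (false = true)), add_zero]
          exact ih h₁.2 h₂.2 hlen
end DjoinList

section Djoin
variable {α : Type*} [LinearOrder α]

def djoin (E F : Finset α) : Finset α :=
  (List.zipWith max (Finset.sort E (· ≤ ·)) (Finset.sort F (· ≤ ·))).toFinset

variable {E F : Finset α} (hEF : E.card = F.card)

theorem djoin_sort :
    Finset.sort (djoin E F) (· ≤ ·) =
      List.zipWith max (Finset.sort E (· ≤ ·)) (Finset.sort F (· ≤ ·)) := by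
  rw [djoin]
  exact (List.toFinset_sort _ ((sorted_zipWith_max ((Finset.sortedLT_sort E).pairwise)
    ((Finset.sortedLT_sort F).pairwise)).nodup)).2
    ((sorted_zipWith_max ((Finset.sortedLT_sort E).pairwise) ((Finset.sortedLT_sort F).pairwise)).imp le_of_lt)

include hEF

theorem djoin_card : (djoin E F).card = E.card := by
  rw [← Finset.length_sort (α := α) (· ≤ ·) (s := djoin E F), djoin_sort, List.length_zipWith]
  simp [hEF]

theorem Nt_djoin (t : α) : Nt (djoin E F) t = max (Nt E t) (Nt F t) := by
  rw [Nt_eq_countP, djoin_sort,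
    countP_zipWith_max ((Finset.sortedLT_sort E).pairwise) ((Finset.sortedLT_sort F).pairwise) (by simp [hEF]),
    Nt_eq_countP, Nt_eq_countP]

theorem djoin_subset_union : djoin E F ⊆ E ∪ F := by
  intro x hx
  rw [djoin, List.mem_toFinset] at hx
  obtain ⟨c, hc, d, hd, hx⟩ := mem_zipWith_max hx
  subst hx
  rcases max_cases c d with ⟨h, _⟩ | ⟨h, _⟩ <;> rw [h]
  · exact Finset.mem_union_left _ (by rwa [← Finset.mem_sort (· ≤ ·)])
  · exact Finset.mem_union_right _ (by rwa [← Finset.mem_sort (· ≤ ·)])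

theorem inter_subset_djoin : E ∩ F ⊆ djoin E F := by
  intro x hx
  rw [Finset.mem_inter] at hx
  rw [djoin, List.mem_toFinset]
  have hlenE : (Finset.sort E (· ≤ ·)).length = E.card := Finset.length_sort _
  have hlenF : (Finset.sort F (· ≤ ·)).length = F.card := Finset.length_sort _
  obtain ⟨i, hiE⟩ := List.get_of_mem ((Finset.mem_sort (α := α) (· ≤ ·)).2 hx.1)
  obtain ⟨j, hjF⟩ := List.get_of_mem ((Finset.mem_sort (α := α) (· ≤ ·)).2 hx.2)
  have hilt := i.isLt
  have hjlt := j.isLt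
  have hzlen : (List.zipWith max (Finset.sort E (· ≤ ·)) (Finset.sort F (· ≤ ·))).length
      = E.card := by rw [List.length_zipWith]; omega
  rcases le_total (i : ℕ) (j : ℕ) with hij | hij
  · have hi' : (i : ℕ) < (List.zipWith max (Finset.sort E (· ≤ ·)) (Finset.sort F (· ≤ ·))).length := by omega
    refine List.mem_iff_get.2 ⟨⟨i, hi'⟩, ?_⟩
    have hle : (Finset.sort F (· ≤ ·)).get ⟨(i : ℕ), by omega⟩ ≤ (Finset.sort F (· ≤ ·)).get j :=
      ((Finset.sortedLT_sort F).strictMono_get.le_iff_le).2 (by simpa [Fin.le_def] using hij)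
    rw [List.get_eq_getElem, List.getElem_zipWith]
    have e1 : (Finset.sort E (· ≤ ·))[(i : ℕ)] = x := by rw [← List.get_eq_getElem, hiE]
    have e2 : (Finset.sort F (· ≤ ·))[(i : ℕ)] ≤ x := by
      rw [hjF] at hle; exact hle
    rw [e1]; exact max_eq_left e2
  · have hj' : (j : ℕ) < (List.zipWith max (Finset.sort E (· ≤ ·)) (Finset.sort F (· ≤ ·))).length := by omega
    refine List.mem_iff_get.2 ⟨⟨j, hj'⟩, ?_⟩
    have hle : (Finset.sort E (· ≤ ·)).get ⟨(j : ℕ), by omega⟩ ≤ (Finset.sort E (· ≤ ·)).get i :=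
      ((Finset.sortedLT_sort E).strictMono_get.le_iff_le).2 (by simpa [Fin.le_def] using hij)
    rw [List.get_eq_getElem, List.getElem_zipWith]
    have e2 : (Finset.sort F (· ≤ ·))[(j : ℕ)] = x := by rw [← List.get_eq_getElem, hjF]
    have e1 : (Finset.sort E (· ≤ ·))[(j : ℕ)] ≤ x := by
      rw [hiE] at hle; exact hle
    rw [e2]; exact max_eq_right e1

theorem dom_djoin_left : Dom E (djoin E F) := by
  rw [dom_iff_count (by rw [djoin_card hEF])]
  intro t
  rw [Nt_djoin hEF]
  exact le_max_left _ _

theorem dom_djoin_right : Dom F (djoin E F) := by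
  rw [dom_iff_count (by rw [djoin_card hEF, hEF])]
  intro t
  rw [Nt_djoin hEF]
  exact le_max_right _ _

theorem djoin_dom' {B : Finset α} (h₁ : Dom E B) (h₂ : Dom F B) : Dom (djoin E F) B := by
  have hcB : E.card = B.card := by
    have := List.Forall₂.length_eq h₁; simpa using this
  rw [dom_iff_count (by rw [djoin_card hEF, hcB])]
  intro t
  rw [Nt_djoin hEF]
  exact max_le ((dom_iff_count hcB).1 h₁ t) ((dom_iff_count (hEF ▸ hcB)).1 h₂ t)

end Djoin
section MaxExists
variable {α : Type*} [LinearOrder α] {m : ℕ}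

theorem foldl_djoin_spec (𝓕 : Finset (Finset α)) (hcard : ∀ E ∈ 𝓕, E.card = m)
    (hclosed : ∀ E ∈ 𝓕, ∀ F ∈ 𝓕, djoin E F ∈ 𝓕) :
    ∀ (l : List (Finset α)) (E : Finset α), E ∈ 𝓕 → (∀ D ∈ l, D ∈ 𝓕) →
      (l.foldl djoin E ∈ 𝓕 ∧ Dom E (l.foldl djoin E) ∧ ∀ D ∈ l, Dom D (l.foldl djoin E)) := by
  intro l
  induction l with
  | nil => intro E hE _; exact ⟨hE, dom_refl E, by simp⟩
  | cons F l ih =>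
    intro E hE hl
    have hF : F ∈ 𝓕 := hl F (by simp)
    have hEF : E.card = F.card := by rw [hcard E hE, hcard F hF]
    have hJ : djoin E F ∈ 𝓕 := hclosed E hE F hF
    obtain ⟨h1, h2, h3⟩ := ih (djoin E F) hJ (fun D hD => hl D (by simp [hD]))
    rw [List.foldl_cons]
    refine ⟨h1, (dom_djoin_left hEF).trans h2, ?_⟩
    intro D hD
    rcases List.mem_cons.1 hD with rfl | hD
    · exact (dom_djoin_right hEF).trans h2
    · exact h3 D hD

theorem exists_dom_max {𝓕 : Finset (Finset α)} (hne : 𝓕.Nonempty)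
    (hcard : ∀ E ∈ 𝓕, E.card = m)
    (hclosed : ∀ E ∈ 𝓕, ∀ F ∈ 𝓕, djoin E F ∈ 𝓕) :
    ∃ C ∈ 𝓕, ∀ D ∈ 𝓕, Dom D C := by
  obtain ⟨E, hE⟩ := hne
  obtain ⟨h1, _, h3⟩ := foldl_djoin_spec 𝓕 hcard hclosed 𝓕.toList E hE
    (fun D hD => Finset.mem_toList.1 hD)
  exact ⟨_, h1, fun D hD => h3 D (Finset.mem_toList.2 hD)⟩

end MaxExists
section Exchange
variable {α : Type*} [LinearOrder α]

theorem Nt_anti (s : Finset α) {t t' : α} (h : t ≤ t') : Nt s t' ≤ Nt s t := by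
  apply Finset.card_le_card
  intro c hc
  simp only [Finset.mem_filter] at hc ⊢
  exact ⟨hc.1, h.trans hc.2⟩

theorem Nt_sdiff {B B' : Finset α} (h : B ⊆ B') (t : α) :
    Nt B' t = Nt B t + Nt (B' \ B) t := by
  rw [Nt, Nt, Nt, ← Finset.card_union_of_disjoint]
  · congr 1
    rw [← Finset.filter_union]
    congr 1
    rw [Finset.union_sdiff_of_subset h]
  · exact Finset.disjoint_filter_filter (Finset.disjoint_sdiff)

end Exchange
section ExchangeMain
variable {α : Type*} [LinearOrder α]

/-- The key nesting lemma: maxima of consecutive-level families nest. -/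
theorem max_nested {Y B B' C C' : Finset α} {m : ℕ}
    (hBB' : B ⊆ B') (hBc : B.card = m) (hB'c : B'.card = m + 1)
    (hCY : C ⊆ Y) (hC'Y : C' ⊆ Y) (hCc : C.card = m) (hC'c : C'.card = m + 1)
    (hCB : ∀ t, Nt C t ≤ Nt B t) (hC'B' : ∀ t, Nt C' t ≤ Nt B' t)
    (hCmax : ∀ D : Finset α, D ⊆ Y → D.card = m → (∀ t, Nt D t ≤ Nt B t) →
      ∀ t, Nt D t ≤ Nt C t)
    (hC'max : ∀ D : Finset α, D ⊆ Y → D.card = m + 1 → (∀ t, Nt D t ≤ Nt B' t) →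
      ∀ t, Nt D t ≤ Nt C' t) :
    C ⊆ C' := by
  by_contra hns
  have hne : (C \ C').Nonempty := by
    rw [Finset.sdiff_nonempty]; exact hns
  set x := (C \ C').max' hne with hxdef
  have hxmem := (C \ C').max'_mem hne
  rw [← hxdef, Finset.mem_sdiff] at hxmem
  obtain ⟨hxC, hxC'⟩ := hxmem
  have hlemaxx : ∀ c ∈ C \ C', c ≤ x := by
    intro c hc; rw [hxdef]; exact (C \ C').le_max' c hc
  clear_value x
  -- elements of C above x are in C'
  have hCgt : C.filter (fun c => x < c) ⊆ C'.filter (fun c => x < c) := by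
    intro c hc
    simp only [Finset.mem_filter] at hc ⊢
    refine ⟨?_, hc.2⟩
    by_contra hcC'
    have : c ∈ C \ C' := Finset.mem_sdiff.2 ⟨hc.1, hcC'⟩
    exact absurd (hlemaxx c this) (not_le.2 hc.2)
  set u1 := (C.filter (fun c => x < c)).card with hu1
  set u2 := (C'.filter (fun c => x < c)).card with hu2
  have hu12 : u1 ≤ u2 := Finset.card_le_card hCgt
  -- Nt C x = u1 + 1
  have hNCx : Nt C x = u1 + 1 := by
    rw [Nt]
    have : C.filter (fun c => x ≤ c) = insert x (C.filter (fun c => x < c)) := by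
      ext c
      simp only [Finset.mem_filter, Finset.mem_insert]
      constructor
      · rintro ⟨hcC, hxc⟩
        rcases eq_or_lt_of_le hxc with h | h
        · exact Or.inl h.symm
        · exact Or.inr ⟨hcC, h⟩
      · rintro (rfl | ⟨hcC, hxc⟩)
        · exact ⟨hxC, le_refl _⟩
        · exact ⟨hcC, hxc.le⟩
    rw [this, Finset.card_insert_of_notMem (by simp)]
  have hNC'x : Nt C' x = u2 := by
    rw [Nt]
    congr 1
    ext c
    simp only [Finset.mem_filter]
    constructor
    · rintro ⟨hcC', hxc⟩
      exact ⟨hcC', lt_of_le_of_ne hxc (fun h => hxC' (by rw [h]; exact hcC'))⟩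
    · rintro ⟨hcC', hxc⟩
      exact ⟨hcC', hxc.le⟩
  have hu1m : u1 + 1 ≤ m := by
    have := Nt_le_card C x; omega
  -- the element of B' \ B
  have hB'Bcard : (B' \ B).card = 1 := by
    rw [Finset.card_sdiff_of_subset hBB']; omega
  have hNB'B : ∀ t, Nt B' t = Nt B t + Nt (B' \ B) t := fun t => Nt_sdiff hBB' t
  have hNB'B1 : ∀ t, Nt (B' \ B) t ≤ 1 := by
    intro t; have := Nt_le_card (B' \ B) t; omega
  by_cases hbr : u2 = u1 ∨ (u2 = u1 + 1 ∧ Nt B x < Nt B' x)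
  · -- Branch I : lift C' by swapping in x
    have hyne : (C'.filter (fun c => c < x)).Nonempty := by
      rw [← Finset.card_pos]
      have hsplit : (C'.filter (fun c => c < x)).card + (C'.filter (fun c => x < c)).card
          = C'.card := by
        rw [← Finset.card_union_of_disjoint]
        · congr 1
          ext c
          simp only [Finset.mem_union, Finset.mem_filter]
          constructor
          · rintro (⟨h, _⟩ | ⟨h, _⟩) <;> exact h
          · intro hc
            rcases lt_trichotomy c x with h | rfl | h
            · exact Or.inl ⟨hc, h⟩
            · exact absurd hc hxC'
            · exact Or.inr ⟨hc, h⟩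
        · apply Finset.disjoint_filter_filter'
          rw [disjoint_iff]
          ext c
          simp only [Pi.inf_apply, inf_Prop_eq]
          constructor
          · rintro ⟨h1, h2⟩; exact absurd (h1.trans h2) (lt_irrefl c)
          · intro h; exact absurd h (by simp)
      have : u2 ≤ u1 + 1 := by rcases hbr with h | ⟨h, _⟩ <;> omega
      omega
    set y := (C'.filter (fun c => c < x)).max' hyne with hydef
    have hymem := (C'.filter (fun c => c < x)).max'_mem hyne
    rw [← hydef, Finset.mem_filter] at hymem
    obtain ⟨hyC', hyx⟩ := hymem
    have hlemaxy : ∀ c ∈ C'.filter (fun c => c < x), c ≤ y := by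
      intro c hc; rw [hydef]; exact (C'.filter (fun c => c < x)).le_max' c hc
    clear_value y
    set D' := insert x (C'.erase y) with hD'def
    have hxney : x ∉ C'.erase y := fun h => hxC' (Finset.mem_of_mem_erase h)
    have hD'c : D'.card = m + 1 := by
      rw [hD'def, Finset.card_insert_of_notMem hxney, Finset.card_erase_of_mem hyC']
      omega
    have hD'Y : D' ⊆ Y := by
      intro c hc
      rcases Finset.mem_insert.1 hc with rfl | hc
      · exact hCY hxC
      · exact hC'Y (Finset.mem_of_mem_erase hc)
    have hNtD' : ∀ t, Nt D' t = Nt C' t - (if t ≤ y then 1 else 0) + (if t ≤ x then 1 else 0) := by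
      intro t
      rw [hD'def, Nt_insert hxney, Nt_erase hyC' t]
      have : (if t ≤ y then 1 else 0) ≤ Nt (C'.erase y) t + (if t ≤ y then 1 else 0) := by omega
      omega
    -- key : for y < t ≤ x, Nt C' t = u2
    have hNC't : ∀ t, y < t → t ≤ x → Nt C' t = u2 := by
      intro t hyt htx
      rw [Nt]
      congr 1
      ext c
      simp only [Finset.mem_filter]
      constructor
      · rintro ⟨hcC', htc⟩
        refine ⟨hcC', ?_⟩
        by_contra hcx
        push_neg at hcx
        have hcx' : c < x := lt_of_le_of_ne hcx (fun h => hxC' (by rw [← h]; exact hcC'))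
        have : c ≤ y := hlemaxy c (Finset.mem_filter.2 ⟨hcC', hcx'⟩)
        exact absurd (htc.trans this) (not_le.2 hyt)
      · rintro ⟨hcC', hxc⟩
        exact ⟨hcC', (htx.trans hxc.le)⟩
    have hD'B' : ∀ t, Nt D' t ≤ Nt B' t := by
      intro t
      rw [hNtD' t]
      by_cases hty : t ≤ y
      · have htx : t ≤ x := hty.trans hyx.le
        simp only [if_pos hty, if_pos htx]
        have h1 : 1 ≤ Nt C' t :=
          Finset.card_pos.2 ⟨y, Finset.mem_filter.2 ⟨hyC', hty⟩⟩
        have := hC'B' t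
        omega
      · by_cases htx : t ≤ x
        · push_neg at hty
          simp only [if_neg (not_le.2 hty), if_pos htx]
          rw [hNC't t hty htx]
          have hc1 : Nt C x ≤ Nt C t := Nt_anti C htx
          have hc2 : Nt C t ≤ Nt B t := hCB t
          rcases hbr with h | ⟨h, hBx⟩
          · have : Nt B t ≤ Nt B' t := by rw [hNB'B t]; omega
            omega
          · have hBdiff : 1 ≤ Nt (B' \ B) x := by
              have := hNB'B x; omega
            have : 1 ≤ Nt (B' \ B) t := le_trans hBdiff (Nt_anti _ htx)
            have := hNB'B t
            omega
        · simp only [if_neg hty, if_neg htx]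
          have := hC'B' t
          omega
    have hcontra := hC'max D' hD'Y hD'c hD'B' x
    rw [hNtD' x] at hcontra
    simp only [if_pos (le_refl x), if_neg (not_le.2 hyx)] at hcontra
    omega
  · -- Branch II : lift C by swapping x for z
    push_neg at hbr
    have hbr' : u1 + 1 ≤ u2 := by
      rcases lt_or_eq_of_le hu12 with h | h
      · omega
      · exact absurd h.symm hbr.1
    have hVne : ((C'.filter (fun c => x < c)) \ (C.filter (fun c => x < c))).Nonempty := by
      rw [← Finset.card_pos, Finset.card_sdiff_of_subset hCgt]
      omega
    set V := (C'.filter (fun c => x < c)) \ (C.filter (fun c => x < c)) with hVdef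
    have hVcard : V.card = u2 - u1 := by rw [hVdef, Finset.card_sdiff_of_subset hCgt]
    set z := V.min' hVne with hzdef
    have hzmem := V.min'_mem hVne
    rw [← hzdef] at hzmem
    have hleminz : ∀ c ∈ V, z ≤ c := by
      intro c hc; rw [hzdef]; exact V.min'_le c hc
    clear_value z
    rw [hVdef, Finset.mem_sdiff] at hzmem
    obtain ⟨hz1, hz2⟩ := hzmem
    rw [Finset.mem_filter] at hz1
    obtain ⟨hzC', hxz⟩ := hz1
    have hzC : z ∉ C := by
      intro h
      exact hz2 (Finset.mem_filter.2 ⟨h, hxz⟩)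
    set D := insert z (C.erase x) with hDdef
    have hznex : z ∉ C.erase x := fun h => hzC (Finset.mem_of_mem_erase h)
    have hDc : D.card = m := by
      rw [hDdef, Finset.card_insert_of_notMem hznex, Finset.card_erase_of_mem hxC]
      omega
    have hDY : D ⊆ Y := by
      intro c hc
      rcases Finset.mem_insert.1 hc with rfl | hc
      · exact hC'Y hzC'
      · exact hCY (Finset.mem_of_mem_erase hc)
    have hNtD : ∀ t, Nt D t = Nt C t - (if t ≤ x then 1 else 0) + (if t ≤ z then 1 else 0) := by
      intro t
      rw [hDdef, Nt_insert hznex, Nt_erase hxC t]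
      omega
    -- key : for x < t ≤ z, Nt C t + (u2 - u1) ≤ Nt C' t
    have hkey : ∀ t, x < t → t ≤ z → Nt C t + (u2 - u1) ≤ Nt C' t := by
      intro t hxt htz
      have hsub1 : C.filter (fun c => t ≤ c) ⊆ C'.filter (fun c => t ≤ c) := by
        intro c hc
        rw [Finset.mem_filter] at hc ⊢
        refine ⟨?_, hc.2⟩
        have : c ∈ C.filter (fun c => x < c) :=
          Finset.mem_filter.2 ⟨hc.1, lt_of_lt_of_le hxt hc.2⟩
        exact (Finset.mem_filter.1 (hCgt this)).1
      have hsub2 : V ⊆ C'.filter (fun c => t ≤ c) := by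
        intro c hc
        have hzc : z ≤ c := hleminz c hc
        rw [hVdef, Finset.mem_sdiff, Finset.mem_filter] at hc
        exact Finset.mem_filter.2 ⟨hc.1.1, htz.trans hzc⟩
      have hdisj : Disjoint (C.filter (fun c => t ≤ c)) V := by
        rw [Finset.disjoint_left]
        intro c hc hcV
        rw [hVdef, Finset.mem_sdiff] at hcV
        rw [Finset.mem_filter] at hc
        exact hcV.2 (Finset.mem_filter.2 ⟨hc.1, lt_of_lt_of_le hxt hc.2⟩)
      have := Finset.card_le_card (Finset.union_subset hsub1 hsub2)
      rw [Finset.card_union_of_disjoint hdisj, hVcard] at this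
      exact this
    have hDB : ∀ t, Nt D t ≤ Nt B t := by
      intro t
      rw [hNtD t]
      by_cases htx : t ≤ x
      · simp only [if_pos htx, if_pos (htx.trans hxz.le)]
        have h1 : 1 ≤ Nt C t := by
          have : Nt C x ≤ Nt C t := Nt_anti C htx
          omega
        have := hCB t
        omega
      · by_cases htz : t ≤ z
        · push_neg at htx
          simp only [if_neg (not_le.2 htx), if_pos htz]
          have hk := hkey t htx htz
          have hc' := hC'B' t
          have hb := hNB'B t
          have hb1 := hNB'B1 t
          rcases lt_or_eq_of_le hbr' with h | h
          · omega
          · -- u2 = u1 + 1 and Nt B' x ≤ Nt B x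
            have hBx : Nt (B' \ B) x = 0 := by
              have h1 := hbr.2 h.symm
              have := hNB'B x
              omega
            have : Nt (B' \ B) t = 0 := by
              have := Nt_anti (B' \ B) htx.le
              omega
            omega
        · simp only [if_neg htx, if_neg htz]
          have := hCB t
          omega
    have hcontra := hCmax D hDY hDc hDB z
    rw [hNtD z] at hcontra
    simp only [if_pos (le_refl z), if_neg (not_le.2 hxz)] at hcontra
    omega

end ExchangeMain
section HalfChain
variable {α : Type*} [LinearOrder α]

/-- Removing the max element keeps domination one level down. -/
theorem erase_max_dom {A Bi Bsucc : Finset α} {i : ℕ} (hAc : A.card = i + 1)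
    (hBic : Bi.card = i) (hBsc : Bsucc.card = i + 1) (hBB : Bi ⊆ Bsucc)
    (hA : Dom A Bsucc) :
    Dom (A.erase (A.max' (Finset.card_pos.1 (by omega)))) Bi := by
  have hAne : A.Nonempty := Finset.card_pos.1 (by omega)
  set a := A.max' hAne with hadef
  have haA : a ∈ A := by rw [hadef]; exact A.max'_mem hAne
  have hamax : ∀ c ∈ A, c ≤ a := by intro c hc; rw [hadef]; exact A.le_max' c hc
  rw [dom_iff_count (by rw [Finset.card_erase_of_mem haA, hAc, hBic]; omega)]
  intro t
  have hErase : Nt A t = Nt (A.erase a) t + (if t ≤ a then 1 else 0) := Nt_erase haA t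
  have hA' := (dom_iff_count (by omega)).1 hA t
  have hBsplit := Nt_sdiff hBB t
  have hBd1 : Nt (Bsucc \ Bi) t ≤ 1 := by
    have h1 := Nt_le_card (Bsucc \ Bi) t
    have h2 : (Bsucc \ Bi).card = 1 := by rw [Finset.card_sdiff_of_subset hBB]; omega
    omega
  by_cases hta : t ≤ a
  · have h1 : 1 ≤ Nt A t := Finset.card_pos.2 ⟨a, Finset.mem_filter.2 ⟨haA, hta⟩⟩
    rw [if_pos hta] at hErase
    omega
  · have h0 : Nt A t = 0 := by
      rw [Nt, Finset.card_eq_zero, Finset.filter_eq_empty_iff]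
      intro c hc
      intro htc
      exact hta (htc.trans (hamax c hc))
    have := Finset.card_le_card (Finset.filter_subset_filter (fun x => t ≤ x)
      (Finset.erase_subset a A))
    rw [Nt] at h0
    rw [Nt]
    omega

theorem half_chain (p : ℕ) (B : ℕ → Finset α)
    (hBmono : ∀ i, i < p → B i ⊆ B (i + 1)) (hBcard : ∀ i, i ≤ p → (B i).card = i)
    (Y : Finset α) (hYcard : Y.card = p) (hYB : Dom Y (B p)) :
    ∃ C : ℕ → Finset α, C p = Y ∧ (∀ i, i < p → C i ⊆ C (i + 1)) ∧
      (∀ i, i ≤ p → (C i).card = i ∧ Dom (C i) (B i)) ∧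
      (∀ i, i ≤ p → ∀ A : Finset α, A ⊆ Y → A.card = i → Dom A (B i) → Dom A (C i)) := by
  classical
  -- the family at each level
  set fam : ℕ → Finset (Finset α) :=
    fun i => (Y.powersetCard i).filter (fun A => Dom A (B i)) with hfam
  have hmem : ∀ i A, A ∈ fam i ↔ (A ⊆ Y ∧ A.card = i ∧ Dom A (B i)) := by
    intro i A
    rw [hfam]
    simp only [Finset.mem_filter, Finset.mem_powersetCard]
    tauto
  -- nonemptiness by downward induction
  have hstep : ∀ i, i < p → (fam (i + 1)).Nonempty → (fam i).Nonempty := by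
    intro i hip ⟨A, hA⟩
    rw [hmem] at hA
    obtain ⟨hAY, hAc, hAd⟩ := hA
    have hAne : A.Nonempty := Finset.card_pos.1 (by omega)
    refine ⟨A.erase (A.max' hAne), ?_⟩
    rw [hmem]
    refine ⟨(Finset.erase_subset _ _).trans hAY, ?_, ?_⟩
    · simp [Finset.card_erase_of_mem (A.max'_mem hAne), hAc]
    · exact erase_max_dom hAc (hBcard i (by omega)) (hBcard (i+1) (by omega)) (hBmono i hip) hAd
  have hnonempty : ∀ k, k ≤ p → (fam (p - k)).Nonempty := by
    intro k
    induction k with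
    | zero =>
      intro _
      refine ⟨Y, ?_⟩
      rw [Nat.sub_zero, hmem]
      exact ⟨Finset.Subset.refl Y, hYcard, hYB⟩
    | succ k ih =>
      intro hk
      have h1 : p - (k+1) < p := by omega
      have h2 : p - (k+1) + 1 = p - k := by omega
      have := hstep (p - (k+1)) h1 (by rw [h2]; exact ih (by omega))
      exact this
  have hne : ∀ i, i ≤ p → (fam i).Nonempty := by
    intro i hi
    have := hnonempty (p - i) (by omega)
    rwa [Nat.sub_sub_self hi] at this
  -- maxima exist
  have hmax : ∀ i, i ≤ p → ∃ C ∈ fam i, ∀ D ∈ fam i, Dom D C := by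
    intro i hi
    apply exists_dom_max (hne i hi) (m := i)
    · intro E hE; exact ((hmem i E).1 hE).2.1
    · intro E hE F hF
      rw [hmem] at hE hF ⊢
      have hEF : E.card = F.card := by rw [hE.2.1, hF.2.1]
      refine ⟨(djoin_subset_union hEF).trans (Finset.union_subset hE.1 hF.1), ?_, ?_⟩
      · rw [djoin_card hEF, hE.2.1]
      · exact djoin_dom' hEF hE.2.2 hF.2.2
  choose Cfun hCmem hCmax using hmax
  set C : ℕ → Finset α := fun i => if h : i ≤ p then Cfun i h else ∅ with hCdef
  have hCval : ∀ i (h : i ≤ p), C i = Cfun i h := by intro i h; rw [hCdef]; simp [h]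
  have hCprops : ∀ i (h : i ≤ p), C i ⊆ Y ∧ (C i).card = i ∧ Dom (C i) (B i) := by
    intro i h
    rw [hCval i h]
    exact (hmem i _).1 (hCmem i h)
  have hCmax' : ∀ i (h : i ≤ p), ∀ A : Finset α, A ⊆ Y → A.card = i → Dom A (B i) →
      Dom A (C i) := by
    intro i h A hAY hAc hAd
    rw [hCval i h]
    exact hCmax i h A ((hmem i A).2 ⟨hAY, hAc, hAd⟩)
  -- C p = Y
  have hCp : C p = Y := by
    have h1 := hCprops p (le_refl p)
    have h2 := hCmax' p (le_refl p) Y (Finset.Subset.refl Y) hYcard hYB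
    -- both C p ⊆ Y with card p
    exact Finset.eq_of_subset_of_card_le h1.1 (by rw [h1.2.1, hYcard])
  refine ⟨C, hCp, ?_, fun i hi => ⟨(hCprops i hi).2.1, (hCprops i hi).2.2⟩,
    fun i hi A hAY hAc hAd => hCmax' i hi A hAY hAc hAd⟩
  -- nesting via max_nested
  intro i hip
  have h1 := hCprops i (by omega)
  have h2 := hCprops (i+1) (by omega)
  have hBc1 := hBcard i (by omega)
  have hBc2 := hBcard (i+1) (by omega)
  apply max_nested (Y := Y) (B := B i) (B' := B (i+1)) (m := i) (hBmono i hip) hBc1 hBc2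
    h1.1 h2.1 h1.2.1 h2.2.1
  · intro t
    exact (dom_iff_count (by rw [h1.2.1, hBc1])).1 h1.2.2 t
  · intro t
    exact (dom_iff_count (by rw [h2.2.1, hBc2])).1 h2.2.2 t
  · intro D hDY hDc hDB t
    have hDom : Dom D (B i) := (dom_iff_count (by rw [hDc, hBc1])).2 hDB
    have := hCmax' i (by omega) D hDY hDc hDom
    exact (dom_iff_count (by rw [hDc, h1.2.1])).1 this t
  · intro D hDY hDc hDB t
    have hDom : Dom D (B (i+1)) := (dom_iff_count (by rw [hDc, hBc2])).2 hDB
    have := hCmax' (i+1) (by omega) D hDY hDc hDom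
    exact (dom_iff_count (by rw [hDc, h2.2.1])).1 this t

end HalfChain
section DualTransfer
variable {α : Type*} [LinearOrder α]

open OrderDual

theorem sort_image_toDual (A : Finset α) :
    Finset.sort (A.image (toDual : α → αᵒᵈ)) (· ≤ ·) =
      ((Finset.sort A (· ≤ ·)).reverse).map (toDual : α → αᵒᵈ) := by
  have hnodup : (((Finset.sort A (· ≤ ·)).reverse).map (toDual : α → αᵒᵈ)).Nodup := by
    apply List.Nodup.map (fun a b h => toDual.injective h)
    exact List.nodup_reverse.2 (Finset.sort_nodup A _)
  have hsorted : (((Finset.sort A (· ≤ ·)).reverse).map (toDual : α → αᵒᵈ)).Pairwise (· ≤ ·) := by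
    rw [List.pairwise_map, List.pairwise_reverse]
    exact (Finset.pairwise_sort A (· ≤ ·)).imp (fun {a b} h => h)
  have hset : ((((Finset.sort A (· ≤ ·)).reverse).map (toDual : α → αᵒᵈ))).toFinset
      = A.image (toDual : α → αᵒᵈ) := by
    ext b
    simp only [List.mem_toFinset, List.mem_map, List.mem_reverse, Finset.mem_sort,
      Finset.mem_image]
  have := (List.toFinset_sort (α := αᵒᵈ) (· ≤ ·) hnodup).2 hsorted
  rw [hset] at this
  exact this

theorem dom_dual_iff {A B : Finset α} :
    Dom (B.image (toDual : α → αᵒᵈ)) (A.image (toDual : α → αᵒᵈ)) ↔ Dom A B := by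
  rw [Dom, Dom, sort_image_toDual, sort_image_toDual]
  rw [List.forall₂_map_left_iff, List.forall₂_map_right_iff, List.forall₂_reverse_iff]
  constructor
  · intro h
    exact (List.Forall₂.flip (h.imp (fun {a b} hab => hab)))
  · intro h
    exact (List.Forall₂.flip (h.imp (fun {a b} hab => hab)))

end DualTransfer
section Compl
variable {α : Type*} [LinearOrder α] [DecidableEq α] [Fintype α]

theorem Nt_compl (A : Finset α) (t : α) : Nt Aᶜ t = Nt (Finset.univ : Finset α) t - Nt A t := by
  have h1 : Aᶜ.filter (fun x => t ≤ x) = (Finset.univ.filter (fun x => t ≤ x)) \ (A.filter (fun x => t ≤ x)) := by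
    ext c
    simp only [Finset.mem_filter, Finset.mem_sdiff, Finset.mem_compl, Finset.mem_univ,
      true_and]
    tauto
  rw [Nt, h1, Finset.card_sdiff_of_subset (Finset.filter_subset_filter _ (Finset.subset_univ A))]
  rfl

theorem dom_compl_iff {A B : Finset α} (hcard : A.card = B.card) :
    Dom Bᶜ Aᶜ ↔ Dom A B := by
  have hc' : Bᶜ.card = Aᶜ.card := by
    rw [Finset.card_compl, Finset.card_compl, hcard]
  rw [dom_iff_count hc', dom_iff_count hcard]
  constructor
  · intro h t
    have := h t
    rw [Nt_compl, Nt_compl] at this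
    have h1 := Nt_mono (Finset.subset_univ A) t
    have h2 := Nt_mono (Finset.subset_univ B) t
    omega
  · intro h t
    have := h t
    rw [Nt_compl, Nt_compl]
    have h1 := Nt_mono (Finset.subset_univ A) t
    have h2 := Nt_mono (Finset.subset_univ B) t
    omega

end Compl
section InitSet
variable {n : ℕ}

theorem initSet_zero (w : Equiv.Perm (Fin n)) : initSet w 0 = ∅ := by
  simp [initSet]

theorem initSet_mono (w : Equiv.Perm (Fin n)) {i j : ℕ} (h : i ≤ j) :
    initSet w i ⊆ initSet w j := by
  intro c hc
  rw [initSet, Finset.mem_image] at hc ⊢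
  obtain ⟨k, hk, rfl⟩ := hc
  rw [Finset.mem_filter] at hk
  exact ⟨k, Finset.mem_filter.2 ⟨hk.1, lt_of_lt_of_le hk.2 h⟩, rfl⟩

theorem filter_lt_card {i : ℕ} (h : i ≤ n) :
    (Finset.univ.filter (fun j : Fin n => (j : ℕ) < i)).card = i := by
  have himg : (Finset.univ.filter (fun j : Fin n => (j : ℕ) < i)).image (Fin.val) =
      Finset.range i := by
    ext m
    simp only [Finset.mem_image, Finset.mem_filter, Finset.mem_univ, true_and,
      Finset.mem_range]
    constructor
    · rintro ⟨j, hj, rfl⟩; exact hj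
    · intro hm; exact ⟨⟨m, lt_of_lt_of_le hm h⟩, hm, rfl⟩
  have := Finset.card_image_of_injective
    (Finset.univ.filter (fun j : Fin n => (j : ℕ) < i)) (Fin.val_injective)
  rw [himg, Finset.card_range] at this
  omega

theorem initSet_card (w : Equiv.Perm (Fin n)) {i : ℕ} (h : i ≤ n) :
    (initSet w i).card = i := by
  rw [initSet, Finset.card_image_of_injective _ w.injective, filter_lt_card h]

theorem initSet_succ (w : Equiv.Perm (Fin n)) {i : ℕ} (h : i < n) :
    initSet w (i + 1) = insert (w ⟨i, h⟩) (initSet w i) := by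
  rw [initSet, initSet]
  have : Finset.univ.filter (fun j : Fin n => (j : ℕ) < i + 1) =
      insert (⟨i, h⟩ : Fin n) (Finset.univ.filter (fun j : Fin n => (j : ℕ) < i)) := by
    ext c
    simp only [Finset.mem_filter, Finset.mem_univ, true_and, Finset.mem_insert]
    constructor
    · intro hc
      rcases Nat.lt_succ_iff_lt_or_eq.1 hc with h' | h'
      · exact Or.inr h'
      · exact Or.inl (Fin.ext h')
    · rintro (rfl | hc)
      · simp
      · exact Nat.lt_succ_of_lt hc
  rw [this, Finset.image_insert]

theorem initSet_self_not_mem (w : Equiv.Perm (Fin n)) {i : ℕ} (h : i < n) :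
    w ⟨i, h⟩ ∉ initSet w i := by
  rw [initSet]
  simp only [Finset.mem_image, Finset.mem_filter, Finset.mem_univ, true_and]
  rintro ⟨j, hj, hjw⟩
  have := w.injective hjw
  subst this
  simp at hj

theorem initSet_univ (w : Equiv.Perm (Fin n)) : initSet w n = Finset.univ :=
  Finset.eq_univ_of_card _ (by rw [initSet_card w (le_refl n), Fintype.card_fin])

end InitSet
section FullChain
open OrderDual

variable {n : ℕ}

theorem image_ofDual_toDual (s : Finset (Fin n)) :
    (s.image (toDual : Fin n → (Fin n)ᵒᵈ)).image (ofDual : (Fin n)ᵒᵈ → Fin n) = s := by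
  ext c; simp

theorem image_toDual_ofDual (s : Finset ((Fin n)ᵒᵈ)) :
    (s.image (ofDual : (Fin n)ᵒᵈ → Fin n)).image (toDual : Fin n → (Fin n)ᵒᵈ) = s := by
  ext c; simp only [Finset.mem_image]
  constructor
  · rintro ⟨a, ⟨b, hb, rfl⟩, rfl⟩; exact hb
  · intro h; exact ⟨ofDual c, ⟨c, h, rfl⟩, rfl⟩

theorem full_chain (p : ℕ) (hp : p ≤ n) (Y : Finset (Fin n)) (hYc : Y.card = p)
    (w : Equiv.Perm (Fin n)) (hdom : Dom Y (initSet w p)) :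
    ∃ C : ℕ → Finset (Fin n),
      C p = Y ∧ (∀ i, i < n → C i ⊆ C (i + 1)) ∧ (∀ i, i ≤ n → (C i).card = i) ∧
      (∀ i, i ≤ n → Dom (C i) (initSet w i)) ∧
      (∀ i, i ≤ n → ∀ A : Finset (Fin n), A.card = i → Dom A (initSet w i) →
        ((i ≤ p ∧ A ⊆ Y) ∨ (p ≤ i ∧ Y ⊆ A)) → Dom A (C i)) := by
  have hwcard : ∀ i, i ≤ n → (initSet w i).card = i := fun i hi => initSet_card w hi
  -- lower half
  obtain ⟨Cl, hClp, hClchain, hClprops, hClmax⟩ :=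
    half_chain p (fun i => initSet w i)
      (fun i hi => initSet_mono w (Nat.le_succ i))
      (fun i hi => hwcard i (hi.trans hp)) Y hYc hdom
  -- upper half (dualized)
  have hBcard' : ∀ j, j ≤ n - p → (((initSet w (n - j))ᶜ).image (toDual : Fin n → (Fin n)ᵒᵈ)).card = j := by
    intro j hj
    rw [Finset.card_image_of_injective _ toDual.injective, Finset.card_compl,
      hwcard (n - j) (by omega), Fintype.card_fin]
    omega
  obtain ⟨D, hDp, hDchain, hDprops, hDmax⟩ :=
    half_chain (α := (Fin n)ᵒᵈ) (n - p)
      (fun j => ((initSet w (n - j))ᶜ).image (toDual : Fin n → (Fin n)ᵒᵈ))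
      (fun j hj => by
        apply Finset.image_subset_image
        apply Finset.compl_subset_compl.2
        exact initSet_mono w (by omega))
      hBcard'
      (Yᶜ.image (toDual : Fin n → (Fin n)ᵒᵈ))
      (by rw [Finset.card_image_of_injective _ toDual.injective, Finset.card_compl, hYc,
            Fintype.card_fin])
      (by
        have hnnp : n - (n - p) = p := by omega
        show Dom (Yᶜ.image (toDual : Fin n → (Fin n)ᵒᵈ))
          (((initSet w (n - (n - p)))ᶜ).image (toDual : Fin n → (Fin n)ᵒᵈ))
        rw [hnnp, dom_dual_iff]
        exact (dom_compl_iff (A := Y) (B := initSet w p) (by rw [hYc, hwcard p hp])).2 hdom)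
  set Cu : ℕ → Finset (Fin n) := fun i => ((D (n - i)).image (ofDual : (Fin n)ᵒᵈ → Fin n))ᶜ
    with hCudef
  have hDeq : ∀ i, ((Cu i)ᶜ).image (toDual : Fin n → (Fin n)ᵒᵈ) = D (n - i) := by
    intro i
    rw [hCudef]
    simp only [compl_compl]
    exact image_toDual_ofDual _
  have hCup : Cu p = Y := by
    rw [hCudef]
    simp only []
    rw [hDp, image_ofDual_toDual, compl_compl]
  have hCucard : ∀ i, p ≤ i → i ≤ n → (Cu i).card = i := by
    intro i h1 h2
    rw [hCudef]
    simp only []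
    rw [Finset.card_compl, Finset.card_image_of_injective _ ofDual.injective,
      (hDprops (n - i) (by omega)).1, Fintype.card_fin]
    omega
  have hCuchain : ∀ i, p ≤ i → i < n → Cu i ⊆ Cu (i + 1) := by
    intro i h1 h2
    rw [hCudef]
    simp only []
    apply Finset.compl_subset_compl.2
    apply Finset.image_subset_image
    have : n - (i + 1) + 1 = n - i := by omega
    have := hDchain (n - (i + 1)) (by omega)
    rwa [‹n - (i + 1) + 1 = n - i›] at this
  have hCudom : ∀ i, p ≤ i → i ≤ n → Dom (Cu i) (initSet w i) := by
    intro i h1 h2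
    have hD := (hDprops (n - i) (by omega)).2
    have hni : n - (n - i) = i := by omega
    rw [hni] at hD
    rw [← hDeq i] at hD
    rw [dom_dual_iff] at hD
    exact (dom_compl_iff (A := Cu i) (B := initSet w i)
      (by rw [hCucard i h1 h2, hwcard i h2])).1 hD
  have hCumax : ∀ i, p ≤ i → i ≤ n → ∀ A : Finset (Fin n), A.card = i →
      Dom A (initSet w i) → Y ⊆ A → Dom A (Cu i) := by
    intro i h1 h2 A hAc hAd hYA
    have hA' : (Aᶜ.image (toDual : Fin n → (Fin n)ᵒᵈ)) ⊆ Yᶜ.image toDual :=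
      Finset.image_subset_image (Finset.compl_subset_compl.2 hYA)
    have hA'c : (Aᶜ.image (toDual : Fin n → (Fin n)ᵒᵈ)).card = n - i := by
      rw [Finset.card_image_of_injective _ toDual.injective, Finset.card_compl, hAc,
        Fintype.card_fin]
    have hA'd : Dom (Aᶜ.image (toDual : Fin n → (Fin n)ᵒᵈ))
        (((initSet w (n - (n - i)))ᶜ).image toDual) := by
      have hni : n - (n - i) = i := by omega
      rw [hni, dom_dual_iff]
      exact (dom_compl_iff (A := A) (B := initSet w i) (by rw [hAc, hwcard i h2])).2 hAd
    have := hDmax (n - i) (by omega) _ hA' hA'c hA'd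
    rw [← hDeq i, dom_dual_iff] at this
    exact (dom_compl_iff (A := A) (B := Cu i) (by rw [hAc, hCucard i h1 h2])).1 this
  -- glue
  refine ⟨fun i => if i ≤ p then Cl i else Cu i, ?_, ?_, ?_, ?_, ?_⟩
  · simp [hClp]
  · intro i hi
    by_cases h1 : i + 1 ≤ p
    · simp only [if_pos (by omega : i ≤ p), if_pos h1]
      exact hClchain i (by omega)
    · by_cases h2 : i ≤ p
      · -- i = p
        have : i = p := by omega
        subst this
        simp only [if_pos h2, if_neg h1]
        rw [hClp, ← hCup]
        exact hCuchain i (le_refl i) hi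
      · simp only [if_neg h2, if_neg h1]
        exact hCuchain i (by omega) hi
  · intro i hi
    by_cases h : i ≤ p
    · simp only [if_pos h]; exact (hClprops i h).1
    · simp only [if_neg h]; exact hCucard i (by omega) hi
  · intro i hi
    by_cases h : i ≤ p
    · simp only [if_pos h]; exact (hClprops i h).2
    · simp only [if_neg h]; exact hCudom i (by omega) hi
  · intro i hi A hAc hAd hside
    by_cases h : i ≤ p
    · simp only [if_pos h]
      rcases hside with ⟨_, hAY⟩ | ⟨hpi, hYA⟩
      · exact hClmax i h A hAY hAc hAd
      · -- i = p
        have hip : i = p := le_antisymm h hpi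
        subst hip
        have hAY : Y = A := Finset.eq_of_subset_of_card_le hYA (by omega)
        exact hClmax i h A hAY.superset hAc hAd
    · simp only [if_neg h]
      rcases hside with ⟨hip, _⟩ | ⟨_, hYA⟩
      · omega
      · exact hCumax i (by omega) hi A hAc hAd hYA

end FullChain
theorem stmt12 (n p : ℕ) (hn : 1 ≤ n) (hp : p ≤ n)
    (Y : Finset (Fin n)) (hYc : Y.card = p)
    (w : Equiv.Perm (Fin n)) (hdom : Dom Y (initSet w p)) :
    ∃! θ : Equiv.Perm (Fin n),
      initSet θ p = Y ∧ Bruhat θ w ∧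
      ∀ v : Equiv.Perm (Fin n), initSet v p = Y → Bruhat v w → Bruhat v θ := by
  obtain ⟨C, hCp, hCchain, hCcard, hCdom, hCmax⟩ := full_chain p hp Y hYc w hdom
  have hmono : ∀ i j, i ≤ j → j ≤ n → C i ⊆ C j := by
    intro i j hij hjn
    induction j with
    | zero => simpa [Nat.le_zero.1 hij] using Finset.Subset.refl _
    | succ j ih =>
      rcases Nat.lt_succ_iff_lt_or_eq.1 (Nat.lt_succ_of_le hij) with h | h
      · exact (ih (by omega) (by omega)).trans (hCchain j (by omega))
      · subst h; exact Finset.Subset.refl _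
  have hsing : ∀ j : Fin n, ∃ a, C ((j : ℕ) + 1) \ C j = {a} := by
    intro j
    rw [← Finset.card_eq_one, Finset.card_sdiff_of_subset (hCchain j j.isLt),
      hCcard _ j.isLt.le, hCcard _ j.isLt]
    omega
  choose g hg using hsing
  have hgmem : ∀ j : Fin n, g j ∈ C ((j : ℕ) + 1) ∧ g j ∉ C j := by
    intro j
    have : g j ∈ C ((j : ℕ) + 1) \ C j := by rw [hg j]; exact Finset.mem_singleton_self _
    exact Finset.mem_sdiff.1 this
  have hinj : Function.Injective g := by
    have key : ∀ j k : Fin n, (j : ℕ) < (k : ℕ) → g j ≠ g k := by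
      intro j k hjk h
      have h1 : g j ∈ C k := hmono ((j : ℕ) + 1) k (by omega) k.isLt.le ((hgmem j).1)
      rw [h] at h1
      exact (hgmem k).2 h1
    intro j k h
    rcases lt_trichotomy (j : ℕ) (k : ℕ) with hc | hc | hc
    · exact absurd h (key j k hc)
    · exact Fin.ext hc
    · exact absurd h.symm (key k j hc)
  let θ : Equiv.Perm (Fin n) := Equiv.ofBijective g (Finite.injective_iff_bijective.mp hinj)
  have hθapp : ∀ j : Fin n, θ j = g j := fun j => rfl
  have hinit : ∀ i, i ≤ n → initSet θ i = C i := by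
    intro i
    induction i with
    | zero =>
      intro _
      rw [initSet_zero]
      symm
      rw [← Finset.card_eq_zero]
      exact hCcard 0 (by omega)
    | succ i ih =>
      intro hin
      have hilt : i < n := by omega
      rw [initSet_succ θ hilt, ih (by omega)]
      have h1 : θ ⟨i, hilt⟩ ∈ C (i + 1) := by
        rw [hθapp]
        exact (hgmem ⟨i, hilt⟩).1
      have h2 : insert (θ ⟨i, hilt⟩) (C i) ⊆ C (i + 1) :=
        Finset.insert_subset h1 (hCchain i hilt)
      apply Finset.eq_of_subset_of_card_le h2
      rw [hCcard (i+1) hin, Finset.card_insert_of_notMem (by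
        rw [hθapp]; exact (hgmem ⟨i, hilt⟩).2), hCcard i (by omega)]
  -- the three properties
  have hθ1 : initSet θ p = Y := by rw [hinit p hp, hCp]
  have hθ2 : Bruhat θ w := by
    intro i hi
    rw [hinit i hi]
    exact hCdom i hi
  have hθ3 : ∀ v : Equiv.Perm (Fin n), initSet v p = Y → Bruhat v w → Bruhat v θ := by
    intro v hvp hvw i hi
    rw [hinit i hi]
    apply hCmax i hi (initSet v i) (initSet_card v hi) (hvw i hi)
    by_cases h : i ≤ p
    · exact Or.inl ⟨h, hvp ▸ initSet_mono v h⟩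
    · exact Or.inr ⟨by omega, hvp ▸ initSet_mono v (by omega)⟩
  refine ⟨θ, ⟨hθ1, hθ2, hθ3⟩, ?_⟩
  rintro θ' ⟨hθ'1, hθ'2, hθ'3⟩
  have hbt : Bruhat θ θ' := hθ'3 θ hθ1 hθ2
  have hbt' : Bruhat θ' θ := hθ3 θ' hθ'1 hθ'2
  have hiseq : ∀ i, i ≤ n → initSet θ' i = initSet θ i := by
    intro i hi
    exact Dom.antisymm (hbt' i hi) (hbt i hi)
  apply Equiv.ext
  intro j
  have hjn : (j : ℕ) < n := j.isLt
  have hmem : θ' j ∈ initSet θ' ((j : ℕ) + 1) := by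
    rw [initSet_succ θ' hjn]
    have : (⟨(j : ℕ), hjn⟩ : Fin n) = j := Fin.ext rfl
    rw [this]
    exact Finset.mem_insert_self _ _
  have hnmem : θ' j ∉ initSet θ' (j : ℕ) := by
    have : (⟨(j : ℕ), hjn⟩ : Fin n) = j := Fin.ext rfl
    have h := initSet_self_not_mem θ' hjn
    rwa [this] at h
  rw [hiseq _ hjn] at hmem
  rw [hiseq _ hjn.le] at hnmem
  rw [initSet_succ θ hjn] at hmem
  have heta : (⟨(j : ℕ), hjn⟩ : Fin n) = j := Fin.ext rfl
  rw [heta] at hmem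
  rcases Finset.mem_insert.1 hmem with h | h
  · exact h
  · exact absurd h hnmem
end

section
/- Fix p ≤ n, a p-element subset Y of [n], and w ∈ S_n with wW_p ≤ Y (i.e., {w_1,...,w_p} ≤ Y). Then the set {v ∈ S_n : vW_p = Y and w ≤ v in Bruhat order} is nonempty and contains a unique minimal element in the Bruhat order (Deodhar's minimal lift). -/
namespace S13
/-- count of elements of `E` whose value is `< a`. -/
def cnt {n : ℕ} (E : Finset (Fin n)) (a : ℕ) : ℕ :=
  (E.filter (fun x => x.val < a)).card

variable {n : ℕ}

lemma cnt_mono_set {E F : Finset (Fin n)} (h : E ⊆ F) (a : ℕ) : cnt E a ≤ cnt F a :=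
  Finset.card_le_card (Finset.filter_subset_filter _ h)

lemma cnt_le_card (E : Finset (Fin n)) (a : ℕ) : cnt E a ≤ E.card :=
  Finset.card_le_card (Finset.filter_subset _ _)

lemma cnt_mono {E : Finset (Fin n)} {a b : ℕ} (h : a ≤ b) : cnt E a ≤ cnt E b := by
  apply Finset.card_le_card
  intro x hx
  simp only [Finset.mem_filter] at *
  exact ⟨hx.1, lt_of_lt_of_le hx.2 h⟩

lemma cnt_eq_card_of_ge {E : Finset (Fin n)} {a : ℕ} (h : n ≤ a) : cnt E a = E.card := by
  unfold cnt
  congr 1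
  apply Finset.filter_true_of_mem
  intro x _
  exact lt_of_lt_of_le x.isLt h

lemma cnt_insert {E : Finset (Fin n)} {y : Fin n} (hy : y ∉ E) (a : ℕ) :
    cnt (insert y E) a = cnt E a + (if y.val < a then 1 else 0) := by
  unfold cnt
  rw [Finset.filter_insert]
  split
  · rw [Finset.card_insert_of_notMem (by simp [hy])]
  · simp

lemma cnt_erase {E : Finset (Fin n)} {y : Fin n} (hy : y ∈ E) (a : ℕ) :
    cnt (E.erase y) a + (if y.val < a then 1 else 0) = cnt E a := by
  have := cnt_insert (E := E.erase y) (y := y) (Finset.notMem_erase _ _) a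
  rw [Finset.insert_erase hy] at this
  omega

lemma cnt_union_disjoint {E F : Finset (Fin n)} (h : Disjoint E F) (a : ℕ) :
    cnt (E ∪ F) a = cnt E a + cnt F a := by
  unfold cnt
  rw [Finset.filter_union]
  exact Finset.card_union_of_disjoint (Finset.disjoint_filter_filter h)

lemma cnt_subset_le {E F : Finset (Fin n)} (h : E ⊆ F) (a : ℕ) :
    cnt F a ≤ cnt E a + (F.card - E.card) := by
  have h1 : F = E ∪ (F \ E) := by rw [Finset.union_sdiff_of_subset h]
  have h2 : cnt F a = cnt E a + cnt (F \ E) a := by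
    rw [← cnt_union_disjoint (Finset.disjoint_sdiff) a, ← h1]
  have h3 : cnt (F \ E) a ≤ (F \ E).card := cnt_le_card _ _
  rw [Finset.card_sdiff_of_subset h] at h3
  omega

lemma exists_of_cnt_lt {E F : Finset (Fin n)} {a : ℕ} (h : cnt E a < cnt F a) :
    ∃ x ∈ F, x ∉ E ∧ x.val < a := by
  by_contra hc
  push_neg at hc
  have hsub : F.filter (fun x => x.val < a) ⊆ E.filter (fun x => x.val < a) := by
    intro x hx
    simp only [Finset.mem_filter] at *
    refine ⟨?_, hx.2⟩
    by_contra hxe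
    exact absurd hx.2 (not_lt.mpr (hc x hx.1 hxe))
  exact absurd (Finset.card_le_card hsub) (by unfold cnt at h; omega)

lemma exists_ge_of_cnt_lt_card {E : Finset (Fin n)} {a : ℕ} (h : cnt E a < E.card) :
    ∃ x ∈ E, a ≤ x.val := by
  by_contra hc
  push_neg at hc
  have he : E.filter (fun x => x.val < a) = E := Finset.filter_true_of_mem hc
  unfold cnt at h; rw [he] at h; omega

/-- `cnt` as countP of the sorted list. -/
lemma cnt_eq_countP (E : Finset (Fin n)) (a : ℕ) :
    cnt E a = (Finset.sort E (· ≤ ·)).countP (fun x => decide (x.val < a)) := by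
  have h1 : cnt E a = Multiset.countP (fun x => x.val < a) E.val := by
    simp [cnt, Finset.filter, Finset.card, Multiset.countP_eq_card_filter]
  have h2 : (Finset.sort E (· ≤ ·) : Multiset (Fin n)) = E.val := Finset.sort_eq _ _
  rw [h1, ← h2]
  exact Multiset.coe_countP _ _

/-- Pointwise le of sorted lists iff counting condition. -/
lemma forall₂_iff_countP {l m : List (Fin n)} (hl : l.Pairwise (· ≤ ·)) (hm : m.Pairwise (· ≤ ·))
    (hlen : l.length = m.length) :
    List.Forall₂ (· ≤ ·) l m ↔
      ∀ a : ℕ, m.countP (fun x => decide (x.val < a)) ≤ l.countP (fun x => decide (x.val < a)) := by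
  constructor
  · intro h a
    induction h with
    | nil => simp
    | cons hxy _ ih =>
      rename_i x y l' m' _
      rw [List.countP_cons, List.countP_cons]
      have hite : (if y.val < a then 1 else 0) ≤ (if x.val < a then 1 else 0) := by
        by_cases hy : y.val < a
        · have hx : x.val < a := lt_of_le_of_lt (show x.val ≤ y.val from hxy) hy
          simp [hx, hy]
        · simp [hy]
      simp only [decide_eq_true_eq]
      have ih' := ih (List.pairwise_cons.1 hl).2 (List.pairwise_cons.1 hm).2 (by simpa using hlen)
      omega
  · induction l generalizing m with
    | nil =>
      intro _
      have : m = [] := List.length_eq_zero_iff.1 hlen.symm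
      subst this; exact List.Forall₂.nil
    | cons x l' ih =>
      intro hcnt
      match m with
      | [] => simp at hlen
      | y :: m' =>
        have hxy : x ≤ y := by
          by_contra hxyc
          push_neg at hxyc
          have h1 : 1 ≤ (y :: m').countP (fun z => decide (z.val < x.val)) := by
            rw [List.countP_cons]
            have : (y:Fin n).val < x.val := hxyc
            simp [this]
          have h2 : (x :: l').countP (fun z => decide (z.val < x.val)) = 0 := by
            rw [List.countP_eq_zero]
            intro z hz
            simp only [decide_eq_true_eq]
            rcases List.mem_cons.1 hz with h | h
            · subst h; omega
            · have hzz := (List.pairwise_cons.1 hl).1 z h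
              simp only [not_lt]
              exact hzz
          have := hcnt (x.val)
          omega
        refine List.Forall₂.cons hxy (ih (List.pairwise_cons.1 hl).2 (List.pairwise_cons.1 hm).2
          (by simpa using hlen) ?_)
        intro a
        have hca := hcnt a
        rw [List.countP_cons, List.countP_cons] at hca
        by_cases hya : y.val < a
        · have hxa : x.val < a := lt_of_le_of_lt (show x.val ≤ y.val from hxy) hya
          simp only [hya, hxa, decide_eq_true_eq, if_pos] at hca ⊢
          omega
        · have hm0 : m'.countP (fun z => decide (z.val < a)) = 0 := by
            rw [List.countP_eq_zero]
            intro z hz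
            simp only [decide_eq_true_eq, not_lt]
            have hyz := (List.pairwise_cons.1 hm).1 z hz
            have : y.val ≤ z.val := hyz
            omega
          omega

lemma dom_iff_cnt (E F : Finset (Fin n)) :
    Dom E F ↔ E.card = F.card ∧ ∀ a : ℕ, cnt F a ≤ cnt E a := by
  unfold Dom
  constructor
  · intro h
    have hlen := List.Forall₂.length_eq h
    rw [Finset.length_sort, Finset.length_sort] at hlen
    refine ⟨hlen, ?_⟩
    have := (forall₂_iff_countP (Finset.pairwise_sort _ _) (Finset.pairwise_sort _ _)
      (by rw [Finset.length_sort, Finset.length_sort]; exact hlen)).1 h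
    intro a
    rw [cnt_eq_countP, cnt_eq_countP]
    exact this a
  · rintro ⟨hcard, h⟩
    rw [forall₂_iff_countP (Finset.pairwise_sort _ _) (Finset.pairwise_sort _ _)
      (by rw [Finset.length_sort, Finset.length_sort]; exact hcard)]
    intro a
    rw [← cnt_eq_countP, ← cnt_eq_countP]
    exact h a

section InitLemmas
variable {n : ℕ}

lemma card_initSet (w : Equiv.Perm (Fin n)) {i : ℕ} (hi : i ≤ n) : (initSet w i).card = i := by
  unfold initSet
  rw [Finset.card_image_of_injective _ w.injective]
  have : (Finset.univ.filter (fun j : Fin n => j.val < i)) =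
      (Finset.range i).attachFin (fun m hm => lt_of_lt_of_le (Finset.mem_range.1 hm) hi) := by
    ext j
    simp [Finset.mem_attachFin]
  rw [this, Finset.card_attachFin, Finset.card_range]

lemma initSet_zero (w : Equiv.Perm (Fin n)) : initSet w 0 = ∅ := by
  unfold initSet
  simp

lemma initSet_mono (w : Equiv.Perm (Fin n)) {i j : ℕ} (h : i ≤ j) :
    initSet w i ⊆ initSet w j := by
  unfold initSet
  apply Finset.image_subset_image
  intro x hx
  simp only [Finset.mem_filter] at *
  exact ⟨hx.1, lt_of_lt_of_le hx.2 h⟩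

lemma mem_initSet (w : Equiv.Perm (Fin n)) {i : ℕ} {x : Fin n} :
    x ∈ initSet w i ↔ ∃ j : Fin n, j.val < i ∧ w j = x := by
  unfold initSet
  simp only [Finset.mem_image, Finset.mem_filter, Finset.mem_univ, true_and]

lemma not_mem_initSet_self (w : Equiv.Perm (Fin n)) {i : ℕ} (hi : i < n) :
    w ⟨i, hi⟩ ∉ initSet w i := by
  rw [mem_initSet]
  rintro ⟨j, hj, hw⟩
  have := w.injective hw
  subst this
  simp at hj

lemma initSet_succ (w : Equiv.Perm (Fin n)) {i : ℕ} (hi : i < n) :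
    initSet w (i + 1) = insert (w ⟨i, hi⟩) (initSet w i) := by
  ext x
  rw [mem_initSet, Finset.mem_insert, mem_initSet]
  constructor
  · rintro ⟨j, hj, rfl⟩
    rcases Nat.lt_succ_iff_lt_or_eq.1 hj with h | h
    · exact Or.inr ⟨j, h, rfl⟩
    · left; congr 1; exact Fin.ext h
  · rintro (h | ⟨j, hj, rfl⟩)
    · exact ⟨⟨i, hi⟩, Nat.lt_succ_self i, h.symm⟩
    · exact ⟨j, Nat.lt_succ_of_lt hj, rfl⟩

lemma cnt_initSet_succ (w : Equiv.Perm (Fin n)) {i : ℕ} (hi : i < n) (a : ℕ) :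
    cnt (initSet w (i + 1)) a = cnt (initSet w i) a +
      (if (w ⟨i, hi⟩).val < a then 1 else 0) := by
  rw [initSet_succ w hi, cnt_insert (not_mem_initSet_self w hi)]

lemma cnt_initSet_mono (w : Equiv.Perm (Fin n)) {i j : ℕ} (h : i ≤ j) (a : ℕ) :
    cnt (initSet w i) a ≤ cnt (initSet w j) a :=
  cnt_mono_set (initSet_mono w h) a

lemma bruhat_iff_cnt (v u : Equiv.Perm (Fin n)) :
    Bruhat v u ↔ ∀ i ≤ n, ∀ a : ℕ, cnt (initSet u i) a ≤ cnt (initSet v i) a := by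
  unfold Bruhat
  constructor
  · intro h i hi a
    exact ((dom_iff_cnt _ _).1 (h i hi)).2 a
  · intro h i hi
    rw [dom_iff_cnt]
    exact ⟨by rw [card_initSet v hi, card_initSet u hi], h i hi⟩

end InitLemmas

section Main
variable {n : ℕ}

/-- membership in level-`i` slice: `i`-subsets compatible with `Y` at level `p`
and dominating `initSet w i` (in counting form). -/
def Sp (p : ℕ) (Y : Finset (Fin n)) (w : Equiv.Perm (Fin n)) (i : ℕ) (C : Finset (Fin n)) :
    Prop :=
  C.card = i ∧ (i ≤ p → C ⊆ Y) ∧ (p ≤ i → Y ⊆ C) ∧ ∀ a : ℕ, cnt C a ≤ cnt (initSet w i) a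

/-- invariant: `A ∈ Sp i` and `A` is the counting-wise maximum (Bruhat-minimum). -/
def Inv (p : ℕ) (Y : Finset (Fin n)) (w : Equiv.Perm (Fin n)) (i : ℕ) (A : Finset (Fin n)) :
    Prop :=
  Sp p Y w i A ∧ ∀ C, Sp p Y w i C → ∀ a : ℕ, cnt C a ≤ cnt A a

/-- feasibility condition for extending `A` by `y` at step `i → i+1`. -/
def FeasCond (p : ℕ) (Y : Finset (Fin n)) (w : Equiv.Perm (Fin n)) (i : ℕ)
    (A : Finset (Fin n)) (y : Fin n) : Prop :=
  y ∉ A ∧ (i < p → y ∈ Y) ∧ (p ≤ i → y ∉ Y) ∧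
    ∀ a : ℕ, cnt A a + (if y.val < a then 1 else 0) ≤ cnt (initSet w (i + 1)) a

noncomputable def FeasSet (p : ℕ) (Y : Finset (Fin n)) (w : Equiv.Perm (Fin n)) (i : ℕ)
    (A : Finset (Fin n)) : Finset (Fin n) :=
  @Finset.filter _ (FeasCond p Y w i A) (Classical.decPred _) Finset.univ

lemma mem_FeasSet {p : ℕ} {Y : Finset (Fin n)} {w : Equiv.Perm (Fin n)} {i : ℕ}
    {A : Finset (Fin n)} {y : Fin n} :
    y ∈ FeasSet p Y w i A ↔ FeasCond p Y w i A y := by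
  letI := Classical.decPred (FeasCond p Y w i A)
  unfold FeasSet
  rw [Finset.mem_filter]
  exact ⟨fun h => h.2, fun h => ⟨Finset.mem_univ _, h⟩⟩

/-- cnt of univ. -/
lemma cnt_univ {a : ℕ} (ha : a ≤ n) : cnt (Finset.univ : Finset (Fin n)) a = a := by
  unfold cnt
  have : ((Finset.univ : Finset (Fin n)).filter (fun j => j.val < a)) =
      (Finset.range a).attachFin (fun m hm => lt_of_lt_of_le (Finset.mem_range.1 hm) ha) := by
    ext j
    simp [Finset.mem_attachFin]
  rw [this, Finset.card_attachFin, Finset.card_range]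

lemma cnt_split {E : Finset (Fin n)} {b a : ℕ} (h : b ≤ a) :
    cnt E a = cnt E b + (E.filter (fun z => b ≤ z.val ∧ z.val < a)).card := by
  unfold cnt
  rw [← Finset.card_union_of_disjoint]
  · congr 1
    rw [← Finset.filter_or]
    apply Finset.filter_congr
    intro x _
    exact ⟨fun h => by omega, fun h => by omega⟩
  · rw [Finset.disjoint_filter]
    intro x _ hx
    simp only [not_and, not_lt]
    intro hbx
    omega

lemma exists_filter_card_lt {A C : Finset (Fin n)} {P : Fin n → Prop} [DecidablePred P]
    (h : (A.filter P).card < (C.filter P).card) : ∃ x ∈ C, x ∉ A ∧ P x := by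
  by_contra hc
  push_neg at hc
  have hsub : C.filter P ⊆ A.filter P := by
    intro x hx
    simp only [Finset.mem_filter] at *
    refine ⟨?_, hx.2⟩
    by_contra hxa
    exact hc x hx.1 hxa hx.2
  exact absurd (Finset.card_le_card hsub) (by omega)

lemma filter_ge_card {E : Finset (Fin n)} {b : ℕ} :
    (E.filter (fun z => ¬ z.val < b)).card = E.card - cnt E b := by
  have h := Finset.card_filter_add_card_filter_not
    (p := fun z : Fin n => z.val < b) (s := E)
  unfold cnt
  omega

lemma card_le_n {C : Finset (Fin n)} : C.card ≤ n := by
  calc C.card ≤ (Finset.univ : Finset (Fin n)).card := Finset.card_le_card (Finset.subset_univ _)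
  _ = n := by simp

/-- The deletion lemma: any `C ∈ Sp (i+1)` admits a valid deletion. -/
lemma deletion {p i : ℕ} {Y : Finset (Fin n)} {w : Equiv.Perm (Fin n)}
    (hp : p ≤ n)
    (hdomc : ∀ a : ℕ, cnt Y a ≤ cnt (initSet w p) a)
    {C : Finset (Fin n)} (hC : Sp p Y w (i+1) C) :
    ∃ x ∈ C, (p ≤ i → x ∉ Y) ∧ ∀ e : ℕ, cnt (initSet w i) e < cnt C e → x.val < e := by
  classical
  have hin : i + 1 ≤ n := hC.1 ▸ card_le_n
  have hex : ∃ e, cnt (initSet w i) e < cnt C e := by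
    refine ⟨n, ?_⟩
    have h1 : cnt (initSet w i) n ≤ i := by
      rw [cnt_eq_card_of_ge le_rfl, card_initSet w (by omega)]
    have h2 : cnt C n = i + 1 := by rw [cnt_eq_card_of_ge le_rfl, hC.1]
    omega
  set a₀ := Nat.find hex with ha₀def
  have ha₀bad : cnt (initSet w i) a₀ < cnt C a₀ := Nat.find_spec hex
  have hkey : ∀ e : ℕ, cnt (initSet w i) e < cnt C e → a₀ ≤ e := fun e he => Nat.find_min' hex he
  by_cases hip : p ≤ i
  · have h1 : cnt Y a₀ ≤ cnt (initSet w i) a₀ :=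
      le_trans (hdomc a₀) (cnt_initSet_mono w hip a₀)
    obtain ⟨x, hxC, hxY, hxlt⟩ := exists_of_cnt_lt (lt_of_le_of_lt h1 ha₀bad)
    exact ⟨x, hxC, fun _ => hxY, fun e he => lt_of_lt_of_le hxlt (hkey e he)⟩
  · have h2 : cnt (∅ : Finset (Fin n)) a₀ < cnt C a₀ := by
      have : cnt (∅ : Finset (Fin n)) a₀ = 0 := by simp [cnt]
      omega
    obtain ⟨x, hxC, _, hxlt⟩ := exists_of_cnt_lt h2
    exact ⟨x, hxC, fun h => absurd h hip, fun e he => lt_of_lt_of_le hxlt (hkey e he)⟩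

/-- `Sp` is stable under valid deletions. -/
lemma Sp_erase {p i : ℕ} {Y : Finset (Fin n)} {w : Equiv.Perm (Fin n)}
    {C : Finset (Fin n)} (hC : Sp p Y w (i+1) C) (hYc : Y.card = p)
    {x : Fin n} (hx : x ∈ C) (hxY : p ≤ i → x ∉ Y)
    (hval : ∀ e : ℕ, cnt (initSet w i) e < cnt C e → x.val < e) :
    Sp p Y w i (C.erase x) := by
  obtain ⟨hcard, hsubY, hYsub, hdom⟩ := hC
  have hin : i + 1 ≤ n := hcard ▸ card_le_n
  have hcard' : (C.erase x).card = i := by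
    rw [Finset.card_erase_of_mem hx, hcard]
    omega
  have hdom' : ∀ e : ℕ, cnt (C.erase x) e ≤ cnt (initSet w i) e := by
    intro e
    have h1 := cnt_erase hx e
    by_cases hb : cnt (initSet w i) e < cnt C e
    · have hxe : x.val < e := hval e hb
      have h2 : cnt C e ≤ cnt (initSet w (i+1)) e := hdom e
      have h3 : cnt (initSet w (i+1)) e ≤ cnt (initSet w i) e + 1 := by
        have h4 := cnt_subset_le (initSet_mono w (by omega : i ≤ i + 1)) e
        rw [card_initSet w hin, card_initSet w (by omega)] at h4
        omega
      simp only [if_pos hxe] at h1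
      omega
    · omega
  have hY' : p ≤ i → Y ⊆ C.erase x := by
    intro hpi z hz
    rw [Finset.mem_erase]
    exact ⟨fun h => (hxY hpi) (h ▸ hz), hYsub (by omega) hz⟩
  refine ⟨hcard', ?_, hY', hdom'⟩
  intro hip
  rcases Nat.lt_or_ge i p with hlt | hge
  · exact fun z hz => hsubY (by omega) (Finset.erase_subset _ _ hz)
  · have hpi : p = i := le_antisymm hge hip
    have h2 : C.erase x = Y := by
      apply (Finset.eq_of_subset_of_card_le (hY' hge) ?_).symm
      rw [hcard', hYc, hpi]
    rw [h2]

end Main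

section Main2
variable {n : ℕ}

/-- Key lemma: if some `C ∈ Sp (i+1)` beats `A` at threshold `a`, there is a
feasible extension element strictly below `a`. -/
lemma star {p i : ℕ} {Y : Finset (Fin n)} {w : Equiv.Perm (Fin n)}
    (hYc : Y.card = p) (hi : i < n)
    {A : Finset (Fin n)} (hInv : Inv p Y w i A)
    {C : Finset (Fin n)} (hC : Sp p Y w (i+1) C)
    {a : ℕ} (ha : cnt A a < cnt C a) :
    ∃ y : Fin n, FeasCond p Y w i A y ∧ y.val < a := by
  classical
  obtain ⟨hSpA, hmin⟩ := hInv
  obtain ⟨hAcard, hAY, hYA, hAdom⟩ := hSpA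
  obtain ⟨hCcard, hCY, hYC, hCdom⟩ := hC
  obtain ⟨y0, hy0C, hy0A, hy0a⟩ := exists_of_cnt_lt ha
  set D := (C \ A).filter (fun z => z.val < a) with hD
  have hDne : D.Nonempty :=
    ⟨y0, by rw [hD, Finset.mem_filter, Finset.mem_sdiff]; exact ⟨⟨hy0C, hy0A⟩, hy0a⟩⟩
  set y := D.max' hDne with hy
  have hyD : y ∈ D := D.max'_mem hDne
  rw [hD, Finset.mem_filter, Finset.mem_sdiff] at hyD
  obtain ⟨⟨hyC, hyA⟩, hya⟩ := hyD
  refine ⟨y, ⟨hyA, fun hipp => hCY (by omega) hyC, fun hpi hyY => hyA (hYA hpi hyY), ?_⟩, hya⟩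
  intro b
  by_cases hyb : y.val < b
  · rw [if_pos hyb]
    by_cases hba : b ≤ a
    · -- middle range: C ∩ [b,a) ⊆ A
      have hmid : (C.filter (fun z => b ≤ z.val ∧ z.val < a)) ⊆
          (A.filter (fun z => b ≤ z.val ∧ z.val < a)) := by
        intro z hz
        rw [Finset.mem_filter] at *
        refine ⟨?_, hz.2⟩
        by_contra hzA
        have hzD : z ∈ D := by
          rw [hD, Finset.mem_filter, Finset.mem_sdiff]; exact ⟨⟨hz.1, hzA⟩, hz.2.2⟩
        have := D.le_max' z hzD
        rw [← hy] at this
        have : z.val ≤ y.val := this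
        omega
      have h1 := cnt_split (E := C) hba
      have h2 := cnt_split (E := A) hba
      have h3 := Finset.card_le_card hmid
      have h4 := hCdom b
      omega
    · -- b > a : the crucial exchange argument
      push_neg at hba
      by_contra hcon
      push_neg at hcon
      have hq1 : cnt A b ≤ cnt (initSet w i) b := hAdom b
      have hq2 : cnt (initSet w i) b ≤ cnt (initSet w (i+1)) b :=
        cnt_initSet_mono w (by omega) b
      have hqe1 : cnt (initSet w i) b = cnt A b := by omega
      have hqe2 : cnt (initSet w (i+1)) b = cnt A b := by omega
      have hc₀ := cnt_initSet_succ w hi b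
      have hc₀b : ¬ (w ⟨i, hi⟩).val < b := by
        by_contra hcc
        rw [if_pos hcc] at hc₀
        omega
      have hCb : cnt C b ≤ cnt A b := le_trans (hCdom b) (le_of_eq hqe2)
      have hqlei : cnt A b ≤ i := hAcard ▸ cnt_le_card A b
      -- existence of an element of C \ A with value ≥ b
      have hcards : (A.filter (fun z => ¬ z.val < b)).card <
          (C.filter (fun z => ¬ z.val < b)).card := by
        rw [filter_ge_card, filter_ge_card, hAcard, hCcard]
        omega
      obtain ⟨x0, hx0C, hx0A, hx0b⟩ := exists_filter_card_lt hcards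
      set D' := (C \ A).filter (fun z => ¬ z.val < b) with hD'
      have hD'ne : D'.Nonempty :=
        ⟨x0, by rw [hD', Finset.mem_filter, Finset.mem_sdiff]; exact ⟨⟨hx0C, hx0A⟩, hx0b⟩⟩
      set xs := D'.min' hD'ne with hxs
      have hxsD : xs ∈ D' := D'.min'_mem hD'ne
      rw [hD', Finset.mem_filter, Finset.mem_sdiff] at hxsD
      obtain ⟨⟨hxsC, hxsA⟩, hxsb⟩ := hxsD
      have hxsY : p ≤ i → xs ∉ Y := fun hpi hxy => hxsA (hYA hpi hxy)
      have hvalid : ∀ e : ℕ, cnt (initSet w i) e < cnt C e → xs.val < e := by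
        intro e he
        have hs1 : cnt C e ≤ cnt (initSet w (i+1)) e := hCdom e
        have hs2 := cnt_initSet_succ w hi e
        have hc₀e : (w ⟨i, hi⟩).val < e := by
          by_contra hcc
          rw [if_neg hcc] at hs2
          omega
        have hbe : b ≤ e := by omega
        by_contra hxe
        push_neg at hxe
        have hmid2 : (C.filter (fun z => b ≤ z.val ∧ z.val < e)) ⊆
            (A.filter (fun z => b ≤ z.val ∧ z.val < e)) := by
          intro z hz
          rw [Finset.mem_filter] at *
          refine ⟨?_, hz.2⟩
          by_contra hzA
          have hzD : z ∈ D' := by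
            rw [hD', Finset.mem_filter, Finset.mem_sdiff]
            exact ⟨⟨hz.1, hzA⟩, by omega⟩
          have hle := D'.min'_le z hzD
          rw [← hxs] at hle
          have : xs.val ≤ z.val := hle
          omega
        have h1 := cnt_split (E := C) hbe
        have h2 := cnt_split (E := A) hbe
        have h3 := Finset.card_le_card hmid2
        have h4 := hAdom e
        omega
      have hSp' := Sp_erase ⟨hCcard, hCY, hYC, hCdom⟩ hYc hxsC hxsY hvalid
      have hm := hmin _ hSp' a
      have he := cnt_erase hxsC a
      rw [if_neg (by omega : ¬ xs.val < a)] at he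
      omega
  · rw [if_neg hyb]
    exact le_trans (hAdom b) (cnt_initSet_mono w (by omega) b)

/-- Any `C ∈ Sp (i+1)` exceeds `A` by at most one at any threshold. -/
lemma le_succ {p i : ℕ} {Y : Finset (Fin n)} {w : Equiv.Perm (Fin n)}
    (hp : p ≤ n) (hYc : Y.card = p)
    (hdomc : ∀ a : ℕ, cnt Y a ≤ cnt (initSet w p) a)
    {A : Finset (Fin n)} (hInv : Inv p Y w i A)
    {C : Finset (Fin n)} (hC : Sp p Y w (i+1) C) (a : ℕ) :
    cnt C a ≤ cnt A a + 1 := by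
  obtain ⟨x, hxC, hxY, hval⟩ := deletion hp hdomc hC
  have hSp' := Sp_erase hC hYc hxC hxY hval
  have hm := hInv.2 _ hSp' a
  have he := cnt_erase hxC a
  have : (if x.val < a then 1 else 0) ≤ 1 := by split <;> omega
  omega

/-- The feasible set is nonempty. -/
lemma feas_nonempty {p i : ℕ} {Y : Finset (Fin n)} {w : Equiv.Perm (Fin n)}
    (hp : p ≤ n) (hYc : Y.card = p)
    (hdomc : ∀ a : ℕ, cnt Y a ≤ cnt (initSet w p) a)
    (hi : i < n) {A : Finset (Fin n)} (hSpA : Sp p Y w i A) :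
    (FeasSet p Y w i A).Nonempty := by
  classical
  obtain ⟨hAcard, hAY, hYA, hAdom⟩ := hSpA
  by_cases hip : i < p
  · have hAY' : A ⊆ Y := hAY (le_of_lt hip)
    have hne : (Y \ A).Nonempty := by
      rw [← Finset.card_pos, Finset.card_sdiff_of_subset hAY', hYc, hAcard]
      omega
    set y := (Y \ A).max' hne with hydef
    have hymem : y ∈ Y \ A := (Y \ A).max'_mem hne
    rw [Finset.mem_sdiff] at hymem
    refine ⟨y, mem_FeasSet.2 ⟨hymem.2, fun _ => hymem.1, fun hpi => by omega, ?_⟩⟩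
    intro b
    by_cases hyb : y.val < b
    · rw [if_pos hyb]
      have hfull : (Y \ A).filter (fun z => z.val < b) = Y \ A := by
        apply Finset.filter_true_of_mem
        intro z hz
        have hle := (Y \ A).le_max' z hz
        rw [← hydef] at hle
        have : z.val ≤ y.val := hle
        omega
      have hsplit : cnt Y b = cnt A b + cnt (Y \ A) b := by
        rw [← cnt_union_disjoint Finset.disjoint_sdiff b, Finset.union_sdiff_of_subset hAY']
      have hYcnt : cnt (Y \ A) b = p - i := by
        unfold cnt
        rw [hfull, Finset.card_sdiff_of_subset hAY', hYc, hAcard]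
      have h1 := hdomc b
      have h2 := cnt_subset_le (initSet_mono w (by omega : i + 1 ≤ p)) b
      rw [card_initSet w hp, card_initSet w (by omega)] at h2
      omega
    · rw [if_neg hyb]
      exact le_trans (hAdom b) (cnt_initSet_mono w (by omega) b)
  · push_neg at hip
    have hne : ((Finset.univ : Finset (Fin n)) \ A).Nonempty := by
      rw [← Finset.card_pos, Finset.card_sdiff_of_subset (Finset.subset_univ _), Finset.card_univ,
        Fintype.card_fin, hAcard]
      omega
    set y := ((Finset.univ : Finset (Fin n)) \ A).max' hne with hydef
    have hymem : y ∈ (Finset.univ : Finset (Fin n)) \ A :=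
      ((Finset.univ : Finset (Fin n)) \ A).max'_mem hne
    rw [Finset.mem_sdiff] at hymem
    refine ⟨y, mem_FeasSet.2 ⟨hymem.2, fun h => by omega,
      fun hpi hyY => hymem.2 (hYA hip hyY), ?_⟩⟩
    intro b
    by_cases hyb : y.val < b
    · rw [if_pos hyb]
      by_cases hbn : b ≤ n
      · have hfull : ((Finset.univ : Finset (Fin n)) \ A).filter (fun z => z.val < b) =
            (Finset.univ : Finset (Fin n)) \ A := by
          apply Finset.filter_true_of_mem
          intro z hz
          have hle := ((Finset.univ : Finset (Fin n)) \ A).le_max' z hz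
          rw [← hydef] at hle
          have : z.val ≤ y.val := hle
          omega
        have hsplit : cnt (Finset.univ : Finset (Fin n)) b = cnt A b +
            cnt ((Finset.univ : Finset (Fin n)) \ A) b := by
          rw [← cnt_union_disjoint Finset.disjoint_sdiff b,
            Finset.union_sdiff_of_subset (Finset.subset_univ _)]
        have hcnt1 : cnt ((Finset.univ : Finset (Fin n)) \ A) b = n - i := by
          unfold cnt
          rw [hfull, Finset.card_sdiff_of_subset (Finset.subset_univ _), Finset.card_univ,
            Fintype.card_fin, hAcard]
        have hsplit2 : cnt (Finset.univ : Finset (Fin n)) b =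
            cnt (initSet w (i+1)) b +
            cnt ((Finset.univ : Finset (Fin n)) \ initSet w (i+1)) b := by
          rw [← cnt_union_disjoint Finset.disjoint_sdiff b,
            Finset.union_sdiff_of_subset (Finset.subset_univ _)]
        have hcnt2 : cnt ((Finset.univ : Finset (Fin n)) \ initSet w (i+1)) b ≤ n - (i+1) := by
          calc cnt _ b ≤ _ := cnt_le_card _ b
          _ = n - (i + 1) := by
            rw [Finset.card_sdiff_of_subset (Finset.subset_univ _), Finset.card_univ, Fintype.card_fin,
              card_initSet w (by omega)]
        have huniv := cnt_univ (n := n) hbn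
        omega
      · push_neg at hbn
        have h1 : cnt A b = i := by rw [cnt_eq_card_of_ge (by omega), hAcard]
        have h2 : cnt (initSet w (i+1)) b = i + 1 := by
          rw [cnt_eq_card_of_ge (by omega), card_initSet w (by omega)]
        omega
    · rw [if_neg hyb]
      exact le_trans (hAdom b) (cnt_initSet_mono w (by omega) b)

/-- One step of the greedy construction preserves the invariant. -/
lemma step_inv {p i : ℕ} {Y : Finset (Fin n)} {w : Equiv.Perm (Fin n)}
    (hp : p ≤ n) (hYc : Y.card = p)
    (hdomc : ∀ a : ℕ, cnt Y a ≤ cnt (initSet w p) a)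
    (hi : i < n) {A : Finset (Fin n)} (hInv : Inv p Y w i A)
    (hne : (FeasSet p Y w i A).Nonempty) :
    Inv p Y w (i+1) (insert ((FeasSet p Y w i A).min' hne) A) := by
  classical
  set y := (FeasSet p Y w i A).min' hne with hydef
  have hyF : FeasCond p Y w i A y := mem_FeasSet.1 ((FeasSet p Y w i A).min'_mem hne)
  obtain ⟨hyA, hyY, hyNY, hydom⟩ := hyF
  obtain ⟨⟨hAcard, hAY, hYA, hAdom⟩, hmin⟩ := hInv
  have hcard' : (insert y A).card = i + 1 := by
    rw [Finset.card_insert_of_notMem hyA, hAcard]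
  have hsubY : i + 1 ≤ p → insert y A ⊆ Y := by
    intro h
    exact Finset.insert_subset (hyY (by omega)) (hAY (by omega))
  have hYsub : p ≤ i + 1 → Y ⊆ insert y A := by
    intro h
    rcases Nat.lt_or_ge i p with hlt | hge
    · have hpe : p = i + 1 := by omega
      have hsub := hsubY (by omega)
      have : insert y A = Y := by
        apply Finset.eq_of_subset_of_card_le hsub
        rw [hcard', hYc, hpe]
      rw [this]
    · exact le_trans (hYA hge) (Finset.subset_insert _ _)
  refine ⟨⟨hcard', hsubY, hYsub, ?_⟩, ?_⟩
  · intro a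
    rw [cnt_insert hyA]
    exact hydom a
  · intro C hC a
    rw [cnt_insert hyA]
    by_cases hca : cnt C a ≤ cnt A a
    · exact le_trans hca (by omega)
    · push_neg at hca
      obtain ⟨y', hy'F, hy'a⟩ := star hYc hi ⟨⟨hAcard, hAY, hYA, hAdom⟩, hmin⟩ hC hca
      have hle := (FeasSet p Y w i A).min'_le y' (mem_FeasSet.2 hy'F)
      rw [← hydef] at hle
      have hya : y.val < a := lt_of_le_of_lt (show y.val ≤ y'.val from hle) hy'a
      rw [if_pos hya]
      exact le_succ hp hYc hdomc ⟨⟨hAcard, hAY, hYA, hAdom⟩, hmin⟩ hC a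

end Main2

section Chain
variable {n : ℕ}

noncomputable def chainA (p : ℕ) (Y : Finset (Fin n)) (w : Equiv.Perm (Fin n)) :
    ℕ → Finset (Fin n)
  | 0 => ∅
  | i + 1 =>
    if h : (FeasSet p Y w i (chainA p Y w i)).Nonempty then
      insert ((FeasSet p Y w i (chainA p Y w i)).min' h) (chainA p Y w i)
    else chainA p Y w i

lemma chainA_zero (p : ℕ) (Y : Finset (Fin n)) (w : Equiv.Perm (Fin n)) :
    chainA p Y w 0 = ∅ := rfl

lemma chainA_succ (p : ℕ) (Y : Finset (Fin n)) (w : Equiv.Perm (Fin n)) (i : ℕ) :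
    chainA p Y w (i + 1) =
      if h : (FeasSet p Y w i (chainA p Y w i)).Nonempty then
        insert ((FeasSet p Y w i (chainA p Y w i)).min' h) (chainA p Y w i)
      else chainA p Y w i := rfl

lemma chainA_subset_succ (p : ℕ) (Y : Finset (Fin n)) (w : Equiv.Perm (Fin n)) (i : ℕ) :
    chainA p Y w i ⊆ chainA p Y w (i + 1) := by
  rw [chainA_succ]
  split
  · exact Finset.subset_insert _ _
  · exact subset_rfl

lemma chainA_mono (p : ℕ) (Y : Finset (Fin n)) (w : Equiv.Perm (Fin n)) {i j : ℕ}
    (h : i ≤ j) : chainA p Y w i ⊆ chainA p Y w j := by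
  induction j with
  | zero => have : i = 0 := by omega
            subst this; exact subset_rfl
  | succ k ih =>
    rcases Nat.lt_or_ge i (k+1) with hlt | hge
    · exact le_trans (ih (by omega)) (chainA_subset_succ p Y w k)
    · have : i = k + 1 := by omega
      subst this; exact subset_rfl

lemma inv_zero {p : ℕ} {Y : Finset (Fin n)} {w : Equiv.Perm (Fin n)} (hYc : Y.card = p) :
    Inv p Y w 0 ∅ := by
  refine ⟨⟨Finset.card_empty, fun _ => Finset.empty_subset _, ?_, fun a => by simp [cnt]⟩, ?_⟩
  · intro h0
    have : Y.card = 0 := by omega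
    rw [Finset.card_eq_zero.1 this]
  · intro C hC a
    have : C = ∅ := Finset.card_eq_zero.1 hC.1
    subst this
    exact le_rfl

lemma chain_inv {p : ℕ} {Y : Finset (Fin n)} {w : Equiv.Perm (Fin n)}
    (hp : p ≤ n) (hYc : Y.card = p)
    (hdomc : ∀ a : ℕ, cnt Y a ≤ cnt (initSet w p) a) :
    ∀ i ≤ n, Inv p Y w i (chainA p Y w i) := by
  intro i
  induction i with
  | zero => intro _; rw [chainA_zero]; exact inv_zero hYc
  | succ k ih =>
    intro hk
    have hIk := ih (by omega)
    have hne := feas_nonempty hp hYc hdomc (by omega) hIk.1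
    rw [chainA_succ, dif_pos hne]
    exact step_inv hp hYc hdomc (by omega) hIk hne

lemma forall₂_antisymm : ∀ {l m : List (Fin n)},
    List.Forall₂ (· ≤ ·) l m → List.Forall₂ (· ≤ ·) m l → l = m := by
  intro l m h1
  induction h1 with
  | nil => intro _; rfl
  | cons hxy htail ih =>
    intro h2
    obtain ⟨hyx, htail'⟩ := List.forall₂_cons.1 h2
    rw [le_antisymm hxy hyx, ih htail']

lemma dom_antisymm {E F : Finset (Fin n)} (h1 : Dom E F) (h2 : Dom F E) : E = F := by
  have hs : Finset.sort E (· ≤ ·) = Finset.sort F (· ≤ ·) := forall₂_antisymm h1 h2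
  ext x
  rw [← Finset.mem_sort (r := (· ≤ ·)), hs, Finset.mem_sort]

lemma initSet_diff_succ (v : Equiv.Perm (Fin n)) {i : ℕ} (hi : i < n) :
    initSet v (i + 1) \ initSet v i = {v ⟨i, hi⟩} := by
  rw [initSet_succ v hi]
  ext z
  simp only [Finset.mem_sdiff, Finset.mem_insert, Finset.mem_singleton]
  constructor
  · rintro ⟨h | h, hn⟩
    · exact h
    · exact absurd h hn
  · rintro rfl
    exact ⟨Or.inl rfl, not_mem_initSet_self v hi⟩

end Chain

end S13





theorem stmt13 (n p : ℕ) (hn : 1 ≤ n) (hp : p ≤ n)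
    (Y : Finset (Fin n)) (hYc : Y.card = p)
    (w : Equiv.Perm (Fin n)) (hdom : Dom (initSet w p) Y) :
    ∃! ξ : Equiv.Perm (Fin n),
      initSet ξ p = Y ∧ Bruhat w ξ ∧
      ∀ v : Equiv.Perm (Fin n), initSet v p = Y → Bruhat w v → Bruhat ξ v := by
  classical
  have hdomc : ∀ a : ℕ, S13.cnt Y a ≤ S13.cnt (initSet w p) a := ((S13.dom_iff_cnt _ _).1 hdom).2
  have hinv := S13.chain_inv hp hYc hdomc
  have hGcard : ∀ i ≤ n, (S13.chainA p Y w i).card = i := fun i hi => (hinv i hi).1.1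
  have hdiffne : ∀ j : Fin n,
      ((S13.chainA p Y w (j.val + 1)) \ (S13.chainA p Y w j.val)).Nonempty := by
    intro j
    have hjn : j.val < n := j.isLt
    rw [← Finset.card_pos, Finset.card_sdiff_of_subset (S13.chainA_subset_succ p Y w j.val),
      hGcard _ (by omega), hGcard _ (by omega)]
    omega
  set g : Fin n → Fin n :=
    fun j => ((S13.chainA p Y w (j.val + 1)) \ (S13.chainA p Y w j.val)).min' (hdiffne j)
    with hgdef
  have hgmem : ∀ j : Fin n,
      g j ∈ (S13.chainA p Y w (j.val + 1)) \ (S13.chainA p Y w j.val) :=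
    fun j => Finset.min'_mem _ _
  have hins : ∀ j : Fin n, S13.chainA p Y w (j.val + 1) = insert (g j) (S13.chainA p Y w j.val) := by
    intro j
    have hjn : j.val < n := j.isLt
    have h1 := Finset.mem_sdiff.1 (hgmem j)
    apply Finset.Subset.antisymm
    · intro z hz
      by_cases hzG : z ∈ S13.chainA p Y w j.val
      · exact Finset.mem_insert_of_mem hzG
      · have hdc : ((S13.chainA p Y w (j.val + 1)) \ (S13.chainA p Y w j.val)).card = 1 := by
          rw [Finset.card_sdiff_of_subset (S13.chainA_subset_succ p Y w j.val),
            hGcard _ (by omega), hGcard _ (by omega)]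
          omega
        have hzd : z ∈ (S13.chainA p Y w (j.val + 1)) \ (S13.chainA p Y w j.val) :=
          Finset.mem_sdiff.2 ⟨hz, hzG⟩
        obtain ⟨x, hx⟩ := Finset.card_eq_one.1 hdc
        rw [hx, Finset.mem_singleton] at hzd
        have hgx : g j = x := by
          have h2 := hgmem j
          rw [hx, Finset.mem_singleton] at h2
          exact h2
        rw [hzd, ← hgx]
        exact Finset.mem_insert_self _ _
    · exact Finset.insert_subset h1.1 (S13.chainA_subset_succ p Y w j.val)
  have hginj : Function.Injective g := by
    intro j k hjk
    by_contra hne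
    have hne' : j.val ≠ k.val := fun h => hne (Fin.ext h)
    rcases Nat.lt_or_ge j.val k.val with h | h
    · have h1 : g j ∈ S13.chainA p Y w k.val :=
        S13.chainA_mono p Y w (by omega) ((Finset.mem_sdiff.1 (hgmem j)).1)
      have h2 : g k ∉ S13.chainA p Y w k.val := (Finset.mem_sdiff.1 (hgmem k)).2
      rw [hjk] at h1
      exact h2 h1
    · have h1 : g k ∈ S13.chainA p Y w j.val :=
        S13.chainA_mono p Y w (by omega) ((Finset.mem_sdiff.1 (hgmem k)).1)
      have h2 : g j ∉ S13.chainA p Y w j.val := (Finset.mem_sdiff.1 (hgmem j)).2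
      rw [← hjk] at h1
      exact h2 h1
  set ξ : Equiv.Perm (Fin n) := Equiv.ofBijective g (Finite.injective_iff_bijective.1 hginj)
    with hξdef
  have hξg : ∀ j, ξ j = g j := fun j => rfl
  have hinit : ∀ i ≤ n, initSet ξ i = S13.chainA p Y w i := by
    intro i
    induction i with
    | zero =>
      intro _
      rw [S13.initSet_zero, S13.chainA_zero]
    | succ k ih =>
      intro hk
      rw [S13.initSet_succ ξ (show k < n by omega), ih (by omega), hξg]
      exact (hins ⟨k, by omega⟩).symm
  have hP1 : initSet ξ p = Y := by
    rw [hinit p hp]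
    apply Finset.eq_of_subset_of_card_le ((hinv p hp).1.2.1 le_rfl)
    rw [hYc, hGcard p hp]
  have hP2 : Bruhat w ξ := by
    rw [S13.bruhat_iff_cnt]
    intro i hi a
    rw [hinit i hi]
    exact (hinv i hi).1.2.2.2 a
  have hP3 : ∀ v : Equiv.Perm (Fin n), initSet v p = Y → Bruhat w v → Bruhat ξ v := by
    intro v hv hwv
    rw [S13.bruhat_iff_cnt]
    intro i hi a
    rw [hinit i hi]
    apply (hinv i hi).2
    refine ⟨S13.card_initSet v hi, ?_, ?_, ?_⟩
    · intro hipp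
      rw [← hv]
      exact S13.initSet_mono v hipp
    · intro hpi
      rw [← hv]
      exact S13.initSet_mono v hpi
    · exact (S13.bruhat_iff_cnt w v).1 hwv i hi
  refine ⟨ξ, ⟨hP1, hP2, hP3⟩, ?_⟩
  rintro ξ' ⟨h1', h2', h3'⟩
  have hba : Bruhat ξ ξ' := hP3 ξ' h1' h2'
  have hab : Bruhat ξ' ξ := h3' ξ hP1 hP2
  have heq : ∀ i ≤ n, initSet ξ' i = initSet ξ i := fun i hi =>
    S13.dom_antisymm (hab i hi) (hba i hi)
  apply Equiv.ext
  intro j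
  have hjn : j.val < n := j.isLt
  have hd := S13.initSet_diff_succ ξ' hjn
  rw [heq _ (by omega), heq _ (by omega), S13.initSet_diff_succ ξ hjn] at hd
  have hsing := Finset.singleton_injective hd
  exact (show ξ' j = ξ j from hsing.symm)
end
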